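/- arXiv:2307.01272 — 3 statements merged into one kernel-verified Lean document; each statement's English description precedes it below -/
import Mathlib

section
/- For all integers n ≥ 0 and all odd integers t ≥ 1, the number of t-colored overpartitions of 8n+7 is divisible by 32, i.e., p̄_{-t}(8n+7) ≡ 0 (mod 32). -/
open scoped Classical

/-- The infinite product `∏_{k ≥ 0} f k` of formal power series, in the situation where,
for each fixed power of `q`, only finitely many factors contribute: the coefficient of
`q^n` is read off from the product of the factors `f 0, …, f n` (all later factors are
assumed to be `1 + O(q^{n+1})`). -/
noncomputable def seriesProd (f : ℕ → PowerSeries ℤ) : PowerSeries ℤ :=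
  PowerSeries.mk fun n => PowerSeries.coeff (R := ℤ) n (∏ k ∈ Finset.range (n + 1), f k)

/-- The generating function `∏_{k ≥ 1} (1 - q^{2k})^t / (1 - q^k)^{2t}`
for `t`-colored overpartitions. -/
noncomputable def overGF (t : ℕ) : PowerSeries ℤ :=
  seriesProd fun k =>
    (1 - (PowerSeries.X : PowerSeries ℤ) ^ (2 * (k + 1))) ^ t *
      (PowerSeries.invOfUnit (1 - (PowerSeries.X : PowerSeries ℤ) ^ (k + 1)) 1) ^ (2 * t)

/-- `p̄_{-t}(n)`, the number of `t`-colored overpartitions of `n`: the coefficient of `q^n`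
in `∏_{k ≥ 1} (1 - q^{2k})^t / (1 - q^k)^{2t}`. -/
noncomputable def pbar (t n : ℕ) : ℤ :=
  PowerSeries.coeff (R := ℤ) n (overGF t)

/-- Ramanujan's theta function `φ(q^m) = 1 + 2 ∑_{k ≥ 1} q^{m k²}`. -/
noncomputable def phi (m : ℕ) : PowerSeries ℤ :=
  PowerSeries.mk fun n =>
    if n = 0 then 1 else if ∃ k : ℕ, 0 < k ∧ n = m * k ^ 2 then 2 else 0

/-- `φ(-q) = 1 + 2 ∑_{k ≥ 1} (-1)^{k²} q^{k²}` (note `(-1)^{k²} = (-1)^n` at `n = k²`). -/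
noncomputable def phiNeg : PowerSeries ℤ :=
  PowerSeries.mk fun n =>
    if n = 0 then 1 else if ∃ k : ℕ, 0 < k ∧ n = k ^ 2 then 2 * (-1) ^ n else 0

/-- Ramanujan's theta function `ψ(q^m) = ∑_{k ≥ 0} q^{m·k(k+1)/2}`. -/
noncomputable def psi (m : ℕ) : PowerSeries ℤ :=
  PowerSeries.mk fun n => if ∃ k : ℕ, 2 * n = m * (k * (k + 1)) then 1 else 0

/-- `f_r = ∏_{j ≥ 1} (1 - q^{r j})`. -/
noncomputable def fr (r : ℕ) : PowerSeries ℤ :=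
  seriesProd fun j => 1 - (PowerSeries.X : PowerSeries ℤ) ^ (r * (j + 1))


open PowerSeries Finset

namespace GaussAux

/-- congruence mod `X^(N+1)` -/
def md (N : ℕ) (A B : PowerSeries ℤ) : Prop :=
  (PowerSeries.X : PowerSeries ℤ) ^ (N + 1) ∣ (A - B)

lemma md_refl (N : ℕ) (A : PowerSeries ℤ) : md N A A := by simp [md]

lemma md_symm {N A B} (h : md N A B) : md N B A := by
  have : B - A = -(A - B) := by ring
  rw [md, this]
  exact h.neg_right

lemma md_trans {N A B C} (h1 : md N A B) (h2 : md N B C) : md N A C := by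
  have := dvd_add h1 h2
  simpa [md, show A - B + (B - C) = A - C by ring] using this

lemma md_add {N A B C D} (h1 : md N A B) (h2 : md N C D) : md N (A + C) (B + D) := by
  have := dvd_add h1 h2
  simpa [md, show A - B + (C - D) = A + C - (B + D) by ring] using this

lemma md_mul_left {N A B} (C : PowerSeries ℤ) (h : md N A B) : md N (C * A) (C * B) := by
  have := h.mul_left C
  simpa [md, mul_sub] using this

lemma md_mul_right {N A B} (C : PowerSeries ℤ) (h : md N A B) : md N (A * C) (B * C) := by
  have := h.mul_left C
  simpa [md, mul_sub, mul_comm] using this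

lemma md_mul {N A B C D} (h1 : md N A B) (h2 : md N C D) : md N (A * C) (B * D) :=
  md_trans (md_mul_left A h2) (md_mul_right D h1)

lemma md_pow {N A B} (h : md N A B) (t : ℕ) : md N (A ^ t) (B ^ t) := by
  induction t with
  | zero => simpa using md_refl N 1
  | succ t ih => rw [pow_succ, pow_succ]; exact md_mul ih h

lemma md_neg {N A B} (h : md N A B) : md N (-A) (-B) := by
  simpa [md, show -A - -B = -(A - B) by ring] using h.neg_right

lemma md_sum {N : ℕ} {ι : Type*} (s : Finset ι) (f g : ι → PowerSeries ℤ)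
    (h : ∀ i ∈ s, md N (f i) (g i)) : md N (∑ i ∈ s, f i) (∑ i ∈ s, g i) := by
  unfold md at *
  rw [← Finset.sum_sub_distrib]
  exact Finset.dvd_sum h

lemma md_coeff {N A B} (h : md N A B) {i : ℕ} (hi : i ≤ N) :
    PowerSeries.coeff (R := ℤ) i A = PowerSeries.coeff (R := ℤ) i B := by
  have := (PowerSeries.X_pow_dvd_iff.mp h) i (by omega)
  have : PowerSeries.coeff (R := ℤ) i (A - B) = 0 := this
  simpa [sub_eq_zero] using this

lemma md_of_dvd {N k : ℕ} (hk : N < k) {A B : PowerSeries ℤ}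
    (h : (PowerSeries.X : PowerSeries ℤ) ^ k ∣ (A - B)) : md N A B :=
  dvd_trans (pow_dvd_pow _ (by omega)) h

lemma md_X_pow_mul_zero {N k : ℕ} (hk : N < k) (C : PowerSeries ℤ) :
    md N ((PowerSeries.X : PowerSeries ℤ) ^ k * C) 0 := by
  apply md_of_dvd hk; simpa using Dvd.intro _ rfl

lemma md_one_sub_X_pow {N k : ℕ} (hk : N < k) :
    md N (1 - (PowerSeries.X : PowerSeries ℤ) ^ k) 1 := by
  apply md_of_dvd hk
  simpa [show 1 - (PowerSeries.X : PowerSeries ℤ) ^ k - 1 = -(X ^ k) by ring] using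
    (dvd_refl ((PowerSeries.X : PowerSeries ℤ) ^ k)).neg_right

/-- cancel a factor having an exact inverse -/
lemma md_cancel {N : ℕ} {A B C C' : PowerSeries ℤ} (hC : C * C' = 1)
    (h : md N (A * C) (B * C)) : md N A B := by
  have := md_mul_right C' h
  have e : ∀ Z : PowerSeries ℤ, Z * C * C' = Z := by
    intro Z; rw [mul_assoc, hC, mul_one]
  rwa [e, e] at this

/-- congruent units have congruent inverses -/
lemma md_inv {N : ℕ} {A B A' B' : PowerSeries ℤ} (hA : A * A' = 1) (hB : B * B' = 1)
    (h : md N A B) : md N A' B' := by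
  have h2 : md N (A' * (B * B')) (A' * (A * B')) := by
    apply md_mul_left
    exact md_mul_right _ (md_symm h)
  have e1 : A' * (B * B') = A' := by rw [hB, mul_one]
  have e2 : A' * (A * B') = B' := by
    have : A' * (A * B') = (A * A') * B' := by ring
    rw [this, hA, one_mul]
  rwa [e1, e2] at h2

/-- Gaussian binomial coefficient in base `q²`, with `ℤ`-valued second index
(zero out of range). -/
noncomputable def gbz : ℕ → ℤ → PowerSeries ℤ
  | 0, k => if k = 0 then 1 else 0
  | (n+1), k => gbz n (k-1) + (PowerSeries.X : PowerSeries ℤ) ^ (2 * k).toNat * gbz n k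

lemma gbz_succ (n : ℕ) (k : ℤ) :
    gbz (n+1) k = gbz n (k-1) + (PowerSeries.X : PowerSeries ℤ) ^ (2 * k).toNat * gbz n k :=
  rfl

lemma gbz_zero_eq (k : ℤ) : gbz 0 k = if k = 0 then 1 else 0 := rfl

lemma gbz_neg : ∀ (n : ℕ) (k : ℤ), k < 0 → gbz n k = 0 := by
  intro n
  induction n with
  | zero => intro k hk; rw [gbz_zero_eq, if_neg (by omega)]
  | succ n ih =>
    intro k hk
    rw [gbz_succ, ih _ (by omega), ih _ hk]
    ring

lemma gbz_gt : ∀ (n : ℕ) (k : ℤ), (n : ℤ) < k → gbz n k = 0 := by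
  intro n
  induction n with
  | zero => intro k hk; rw [gbz_zero_eq, if_neg (by omega)]
  | succ n ih =>
    intro k hk
    push_cast at hk
    rw [gbz_succ, ih _ (by omega), ih _ (by omega)]
    ring

lemma gbz_zero (n : ℕ) : gbz n 0 = 1 := by
  induction n with
  | zero => rw [gbz_zero_eq, if_pos rfl]
  | succ n ih => rw [gbz_succ, ih, gbz_neg _ _ (by omega)]; simp

lemma gbz_diag (n : ℕ) : gbz n (n : ℤ) = 1 := by
  induction n with
  | zero => rw [Nat.cast_zero, gbz_zero]
  | succ n ih =>
    have h1 : ((n+1 : ℕ) : ℤ) - 1 = (n : ℤ) := by push_cast; ring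
    rw [gbz_succ, h1, ih, gbz_gt n ((n+1 : ℕ) : ℤ) (by push_cast; omega)]
    ring

/-- second Pascal recurrence -/
lemma gbz_pascal2 : ∀ (n : ℕ) (k : ℤ),
    gbz (n+1) k = (PowerSeries.X : PowerSeries ℤ) ^ (2 * ((n:ℤ) + 1 - k)).toNat
      * gbz n (k-1) + gbz n k := by
  intro n
  induction n with
  | zero =>
    intro k
    rw [gbz_succ]
    rcases eq_or_ne k 0 with rfl | h0
    · rw [gbz_neg 0 (0-1) (by omega), gbz_zero]
      norm_num
    rcases eq_or_ne k 1 with rfl | h1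
    · rw [show (1:ℤ) - 1 = 0 from rfl, gbz_zero, gbz_zero_eq, if_neg (by omega)]
      norm_num
    · simp only [gbz_zero_eq, if_neg h0, if_neg (show ¬(k - 1 = 0) by omega)]
      ring
  | succ n ih =>
    intro k
    have hL : gbz (n+1+1) k =
        (PowerSeries.X : PowerSeries ℤ) ^ (2 * ((n:ℤ) + 1 - (k-1))).toNat * gbz n (k-1-1)
          + gbz n (k-1)
        + (PowerSeries.X : PowerSeries ℤ) ^ (2*k).toNat *
          ((PowerSeries.X : PowerSeries ℤ) ^ (2 * ((n:ℤ) + 1 - k)).toNat * gbz n (k-1)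
            + gbz n k) := by
      rw [gbz_succ (n+1) k, ih (k-1), ih k]
    rw [hL, gbz_succ n (k-1), gbz_succ n k]
    have hAC : (PowerSeries.X : PowerSeries ℤ) ^ (2 * ((n:ℤ) + 1 - (k-1))).toNat
        = (PowerSeries.X : PowerSeries ℤ) ^ (2 * (((n+1 : ℕ):ℤ) + 1 - k)).toNat := by
      congr 1
      push_cast
      omega
    by_cases hk : 1 ≤ k ∧ k ≤ (n:ℤ) + 1
    · have hE : (PowerSeries.X : PowerSeries ℤ) ^ (2*k).toNat *
          (PowerSeries.X : PowerSeries ℤ) ^ (2 * ((n:ℤ) + 1 - k)).toNat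
          = (PowerSeries.X : PowerSeries ℤ) ^ (2 * (((n+1 : ℕ):ℤ) + 1 - k)).toNat *
            (PowerSeries.X : PowerSeries ℤ) ^ (2 * (k-1)).toNat := by
        rw [← pow_add, ← pow_add]
        congr 1
        push_cast
        omega
      linear_combination gbz n (k-1-1) * hAC + gbz n (k-1) * hE
    · have hG1 : gbz n (k-1) = 0 := by
        rcases le_or_gt k 0 with h | h
        · exact gbz_neg n (k-1) (by omega)
        · exact gbz_gt n (k-1) (by omega)
      rw [hG1]
      linear_combination gbz n (k-1-1) * hAC

/-- `∏_{i=1}^m (1 - q^{2i})` -/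
noncomputable def EvP (m : ℕ) : PowerSeries ℤ :=
  ∏ i ∈ Finset.range m, (1 - (PowerSeries.X : PowerSeries ℤ) ^ (2*i+2))

lemma EvP_zero : EvP 0 = 1 := by simp [EvP]

lemma EvP_succ (m : ℕ) :
    EvP (m+1) = EvP m * (1 - (PowerSeries.X : PowerSeries ℤ) ^ (2*m+2)) :=
  Finset.prod_range_succ _ _

lemma gbz_mul_EvP : ∀ (n : ℕ) (k : ℕ), k ≤ n →
    gbz n (k : ℤ) * EvP k * EvP (n - k) = EvP n := by
  intro n
  induction n with
  | zero =>
    intro k hk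
    interval_cases k
    simp [gbz_zero, EvP_zero]
  | succ n ih =>
    intro k hk
    rcases Nat.eq_zero_or_pos k with rfl | hk1
    · simp [gbz_zero, EvP_zero]
    rcases eq_or_lt_of_le hk with rfl | hklt
    · rw [gbz_diag, Nat.sub_self, EvP_zero]
      ring
    -- main case 1 ≤ k ≤ n
    have hkn : k ≤ n := by omega
    have hcast : ((k:ℤ) - 1) = ((k-1 : ℕ) : ℤ) := by push_cast [hk1]; ring
    have hpow2 : ((2 * (k:ℤ)).toNat) = 2*k := by omega
    have IH2 := ih k hkn
    have IH1 := ih (k-1) (by omega)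
    have hn1 : n - (k-1) = n + 1 - k := by omega
    rw [hn1] at IH1
    have hEk : EvP k = EvP (k-1) * (1 - (PowerSeries.X : PowerSeries ℤ) ^ (2*k)) := by
      have h' := EvP_succ (k-1)
      rw [show k - 1 + 1 = k by omega] at h'
      rw [h', show 2*(k-1)+2 = 2*k by omega]
    have hEn : EvP (n + 1 - k) = EvP (n - k) *
        (1 - (PowerSeries.X : PowerSeries ℤ) ^ (2*(n-k)+2)) := by
      have h' := EvP_succ (n-k)
      rw [show n - k + 1 = n + 1 - k by omega] at h'
      exact h'
    have hpow : (PowerSeries.X : PowerSeries ℤ) ^ (2*k) *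
        (PowerSeries.X : PowerSeries ℤ) ^ (2*(n-k)+2)
        = (PowerSeries.X : PowerSeries ℤ) ^ (2*n+2) := by
      rw [← pow_add]; congr 1; omega
    rw [gbz_succ, hcast, hpow2, EvP_succ n]
    linear_combination (gbz n ((k-1:ℕ):ℤ) * EvP (n+1-k)) * hEk + (1 - (PowerSeries.X : PowerSeries ℤ)^(2*k)) * IH1 + ((PowerSeries.X : PowerSeries ℤ)^(2*k) * gbz n (k:ℤ) * EvP k) * hEn + ((PowerSeries.X : PowerSeries ℤ)^(2*k) * (1 - (PowerSeries.X : PowerSeries ℤ)^(2*(n-k)+2))) * IH2 - EvP n * hpow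

/-- sign `(-1)^j` for `j : ℤ` -/
noncomputable def sg (j : ℤ) : PowerSeries ℤ := if Even j then 1 else -1

lemma sg_sub_one (j : ℤ) : sg (j-1) = -sg j := by
  by_cases hj : Even j
  · have h' : ¬ Even (j-1) := by rw [Int.even_iff] at *; omega
    simp [sg, hj, h']
  · have h' : Even (j-1) := by rw [Int.even_iff] at *; omega
    simp [sg, hj, h']

lemma sg_add_one (j : ℤ) : sg (j+1) = -sg j := by
  have := sg_sub_one (j+1)
  have h2 : j + 1 - 1 = j := by ring
  rw [h2] at this
  rw [← neg_neg (sg (j+1)), ← this]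

/-- double Pascal (first kind) -/
lemma gbz_pascal1_sq (n : ℕ) (k : ℤ) :
    gbz (n+2) k = gbz n (k-2)
      + ((PowerSeries.X : PowerSeries ℤ) ^ (2*(k-1)).toNat
          + (PowerSeries.X : PowerSeries ℤ) ^ (2*k).toNat) * gbz n (k-1)
      + (PowerSeries.X : PowerSeries ℤ) ^ (2*k).toNat
        * (PowerSeries.X : PowerSeries ℤ) ^ (2*k).toNat * gbz n k := by
  rw [gbz_succ (n+1) k, gbz_succ n (k-1), gbz_succ n k,
      show k - 1 - 1 = k - 2 by ring]
  ring

/-- double Pascal (second kind) -/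
lemma gbz_pascal2_sq (n : ℕ) (k : ℤ) :
    gbz (n+2) k =
      (PowerSeries.X : PowerSeries ℤ) ^ (2*((n:ℤ)+2-k)).toNat
        * (PowerSeries.X : PowerSeries ℤ) ^ (2*((n:ℤ)+2-k)).toNat * gbz n (k-2)
      + ((PowerSeries.X : PowerSeries ℤ) ^ (2*((n:ℤ)+2-k)).toNat
          + (PowerSeries.X : PowerSeries ℤ) ^ (2*((n:ℤ)+1-k)).toNat) * gbz n (k-1)
      + gbz n k := by
  have h1 := gbz_pascal2 (n+1) k
  have h2 := gbz_pascal2 n (k-1)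
  have h3 := gbz_pascal2 n k
  have e1 : ((n+1:ℕ):ℤ) + 1 - k = (n:ℤ) + 2 - k := by push_cast; ring
  have e2 : (n:ℤ) + 1 - (k-1) = (n:ℤ) + 2 - k := by ring
  rw [e1] at h1
  rw [e2] at h2
  rw [h1, h2, h3]
  ring

noncomputable def Ssum (M : ℕ) : PowerSeries ℤ :=
  ∑ j ∈ Finset.Icc (-(M:ℤ)-2) ((M:ℤ)+2),
    sg j * (PowerSeries.X : PowerSeries ℤ) ^ ((j^2).toNat) * gbz (2*M) ((M:ℤ)+j)

noncomputable def Wsum (M : ℕ) : PowerSeries ℤ :=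
  ∑ j ∈ Finset.Icc (-(M:ℤ)-2) ((M:ℤ)+2),
    sg j * (PowerSeries.X : PowerSeries ℤ) ^ (((j+1)^2).toNat) * gbz (2*M) ((M:ℤ)+j)

lemma sum_shift (F : ℤ → PowerSeries ℤ) (a b c : ℤ) :
    ∑ j ∈ Finset.Icc a b, F (j+c) = ∑ j ∈ Finset.Icc (a+c) (b+c), F j := by
  rw [← Finset.map_add_right_Icc a b c, Finset.sum_map]
  rfl

lemma gbz_out (M : ℕ) {j : ℤ} (h : (M:ℤ) < j ∨ j < -(M:ℤ)) :
    gbz (2*M) ((M:ℤ)+j) = 0 := by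
  rcases h with h | h
  · exact gbz_gt _ _ (by push_cast; omega)
  · exact gbz_neg _ _ (by omega)

lemma sum_window (M : ℕ) (c : ℤ → PowerSeries ℤ) {a b : ℤ}
    (ha : a ≤ -(M:ℤ)-2) (hb : (M:ℤ)+2 ≤ b) :
    ∑ j ∈ Finset.Icc a b, c j * gbz (2*M) ((M:ℤ)+j)
      = ∑ j ∈ Finset.Icc (-(M:ℤ)-2) ((M:ℤ)+2), c j * gbz (2*M) ((M:ℤ)+j) := by
  refine (Finset.sum_subset (Finset.Icc_subset_Icc ha hb) ?_).symm
  intro x hx hnx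
  rw [Finset.mem_Icc] at hx hnx
  rw [gbz_out M (by omega), mul_zero]

/-- shift-then-shrink: sum over the big window of a shifted summand -/
lemma sum_T (M : ℕ) (d : ℤ) (hd1 : -1 ≤ d) (hd2 : d ≤ 1)
    (F : ℤ → PowerSeries ℤ) (c : ℤ → PowerSeries ℤ)
    (hF : ∀ j, F j = c (j+d) * gbz (2*M) ((M:ℤ)+(j+d))) :
    ∑ j ∈ Finset.Icc (-(M:ℤ)-3) ((M:ℤ)+3), F j
      = ∑ j ∈ Finset.Icc (-(M:ℤ)-2) ((M:ℤ)+2), c j * gbz (2*M) ((M:ℤ)+j) := by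
  rw [Finset.sum_congr rfl (fun j _ => hF j),
    sum_shift (fun i => c i * gbz (2*M) ((M:ℤ)+i)) (-(M:ℤ)-3) ((M:ℤ)+3) d]
  exact sum_window M c (by omega) (by omega)

/-- no-shift version -/
lemma sum_T0 (M : ℕ) (F : ℤ → PowerSeries ℤ) (c : ℤ → PowerSeries ℤ)
    (hF : ∀ j, F j = c j * gbz (2*M) ((M:ℤ)+j)) :
    ∑ j ∈ Finset.Icc (-(M:ℤ)-3) ((M:ℤ)+3), F j
      = ∑ j ∈ Finset.Icc (-(M:ℤ)-2) ((M:ℤ)+2), c j * gbz (2*M) ((M:ℤ)+j) := by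
  rw [Finset.sum_congr rfl (fun j _ => hF j)]
  exact sum_window M c (by omega) (by omega)


lemma recS (m : ℕ) :
    Ssum (m+2) = -(1 - (PowerSeries.X : PowerSeries ℤ)^(2*m+1))
      * (1 - (PowerSeries.X : PowerSeries ℤ)^(2*m+3)) * Wsum (m+1) := by
  have hset : Finset.Icc (-((m+2:ℕ):ℤ)-2) (((m+2:ℕ):ℤ)+2)
      = Finset.Icc (-((m+1:ℕ):ℤ)-3) (((m+1:ℕ):ℤ)+3) := by
    congr 1 <;> push_cast <;> ring
  have hMz : ((m+2:ℕ):ℤ) = ((m+1:ℕ):ℤ) + 1 := by push_cast; ring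
  have h2m : 2*(m+2) = 2*(m+1)+2 := by ring
  have main : Ssum (m+2) =
      (∑ j ∈ Finset.Icc (-((m+1:ℕ):ℤ)-3) (((m+1:ℕ):ℤ)+3),
        sg j * (PowerSeries.X : PowerSeries ℤ) ^ ((j^2).toNat)
          * gbz (2*(m+1)) (((m+1:ℕ):ℤ)+1+j-2))
    + ((∑ j ∈ Finset.Icc (-((m+1:ℕ):ℤ)-3) (((m+1:ℕ):ℤ)+3),
        sg j * (PowerSeries.X : PowerSeries ℤ) ^ ((j^2).toNat)
          * ((PowerSeries.X : PowerSeries ℤ) ^ ((2*(((m+1:ℕ):ℤ)+1+j-1)).toNat)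
             * gbz (2*(m+1)) (((m+1:ℕ):ℤ)+1+j-1)))
    + ((∑ j ∈ Finset.Icc (-((m+1:ℕ):ℤ)-3) (((m+1:ℕ):ℤ)+3),
        sg j * (PowerSeries.X : PowerSeries ℤ) ^ ((j^2).toNat)
          * ((PowerSeries.X : PowerSeries ℤ) ^ ((2*(((m+1:ℕ):ℤ)+1+j)).toNat)
             * gbz (2*(m+1)) (((m+1:ℕ):ℤ)+1+j-1)))
    + (∑ j ∈ Finset.Icc (-((m+1:ℕ):ℤ)-3) (((m+1:ℕ):ℤ)+3),
        sg j * (PowerSeries.X : PowerSeries ℤ) ^ ((j^2).toNat)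
          * ((PowerSeries.X : PowerSeries ℤ) ^ ((2*(((m+1:ℕ):ℤ)+1+j)).toNat)
             * (PowerSeries.X : PowerSeries ℤ) ^ ((2*(((m+1:ℕ):ℤ)+1+j)).toNat)
             * gbz (2*(m+1)) (((m+1:ℕ):ℤ)+1+j))))) := by
    rw [Ssum, hset, h2m, hMz]
    rw [← Finset.sum_add_distrib, ← Finset.sum_add_distrib, ← Finset.sum_add_distrib]
    refine Finset.sum_congr rfl (fun j hj => ?_)
    rw [gbz_pascal1_sq (2*(m+1)) (((m+1:ℕ):ℤ)+1+j)]
    ring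
  have hS1 : (∑ j ∈ Finset.Icc (-((m+1:ℕ):ℤ)-3) (((m+1:ℕ):ℤ)+3),
      sg j * (PowerSeries.X : PowerSeries ℤ) ^ ((j^2).toNat)
        * gbz (2*(m+1)) (((m+1:ℕ):ℤ)+1+j-2)) = -Wsum (m+1) := by
    rw [sum_T (m+1) (-1) (by norm_num) (by norm_num) _
      (fun i => -(sg i * (PowerSeries.X : PowerSeries ℤ) ^ (((i+1)^2).toNat)))
      (fun j => by
        beta_reduce
        rw [show j + (-1:ℤ) = j - 1 by ring, sg_sub_one, show j - 1 + 1 = j by ring,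
          show ((m+1:ℕ):ℤ)+1+j-2 = ((m+1:ℕ):ℤ)+(j-1) by ring]
        ring)]
    rw [Wsum, ← Finset.sum_neg_distrib]
    exact Finset.sum_congr rfl (fun j _ => by beta_reduce; ring)
  have hS2 : (∑ j ∈ Finset.Icc (-((m+1:ℕ):ℤ)-3) (((m+1:ℕ):ℤ)+3),
      sg j * (PowerSeries.X : PowerSeries ℤ) ^ ((j^2).toNat)
        * ((PowerSeries.X : PowerSeries ℤ) ^ ((2*(((m+1:ℕ):ℤ)+1+j-1)).toNat)
           * gbz (2*(m+1)) (((m+1:ℕ):ℤ)+1+j-1)))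
      = (PowerSeries.X : PowerSeries ℤ)^(2*m+1) * Wsum (m+1) := by
    rw [sum_T0 (m+1) _
      (fun i => (PowerSeries.X : PowerSeries ℤ)^(2*m+1)
        * (sg i * (PowerSeries.X : PowerSeries ℤ) ^ (((i+1)^2).toNat)))
      (fun j => by
        beta_reduce
        rw [show ((m+1:ℕ):ℤ)+1+j-1 = ((m+1:ℕ):ℤ)+j by ring]
        by_cases hj : -(((m+1:ℕ):ℤ)) ≤ j ∧ j ≤ ((m+1:ℕ):ℤ)
        · have key : (PowerSeries.X : PowerSeries ℤ)^((j^2).toNat)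
              * (PowerSeries.X : PowerSeries ℤ)^((2*(((m+1:ℕ):ℤ)+j)).toNat)
              = (PowerSeries.X : PowerSeries ℤ)^(2*m+1)
              * (PowerSeries.X : PowerSeries ℤ)^(((j+1)^2).toNat) := by
            rw [← pow_add, ← pow_add]; congr 1
            have e1 : (j+1)^2 = j^2 + 2*j + 1 := by ring
            have e2 : (0:ℤ) ≤ j^2 := sq_nonneg j
            have e3 : (0:ℤ) ≤ (j+1)^2 := sq_nonneg (j+1)
            omega
          linear_combination (sg j * gbz (2*(m+1)) (((m+1:ℕ):ℤ)+j)) * key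
        · rw [gbz_out (m+1) (by omega)]; ring)]
    rw [Wsum, Finset.mul_sum]
    exact Finset.sum_congr rfl (fun j _ => by beta_reduce; ring)
  have hS3 : (∑ j ∈ Finset.Icc (-((m+1:ℕ):ℤ)-3) (((m+1:ℕ):ℤ)+3),
      sg j * (PowerSeries.X : PowerSeries ℤ) ^ ((j^2).toNat)
        * ((PowerSeries.X : PowerSeries ℤ) ^ ((2*(((m+1:ℕ):ℤ)+1+j)).toNat)
           * gbz (2*(m+1)) (((m+1:ℕ):ℤ)+1+j-1)))
      = (PowerSeries.X : PowerSeries ℤ)^(2*m+3) * Wsum (m+1) := by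
    rw [sum_T0 (m+1) _
      (fun i => (PowerSeries.X : PowerSeries ℤ)^(2*m+3)
        * (sg i * (PowerSeries.X : PowerSeries ℤ) ^ (((i+1)^2).toNat)))
      (fun j => by
        beta_reduce
        rw [show ((m+1:ℕ):ℤ)+1+j-1 = ((m+1:ℕ):ℤ)+j by ring]
        by_cases hj : -(((m+1:ℕ):ℤ)) ≤ j ∧ j ≤ ((m+1:ℕ):ℤ)
        · have key : (PowerSeries.X : PowerSeries ℤ)^((j^2).toNat)
              * (PowerSeries.X : PowerSeries ℤ)^((2*(((m+1:ℕ):ℤ)+1+j)).toNat)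
              = (PowerSeries.X : PowerSeries ℤ)^(2*m+3)
              * (PowerSeries.X : PowerSeries ℤ)^(((j+1)^2).toNat) := by
            rw [← pow_add, ← pow_add]; congr 1
            have e1 : (j+1)^2 = j^2 + 2*j + 1 := by ring
            have e2 : (0:ℤ) ≤ j^2 := sq_nonneg j
            have e3 : (0:ℤ) ≤ (j+1)^2 := sq_nonneg (j+1)
            omega
          linear_combination (sg j * gbz (2*(m+1)) (((m+1:ℕ):ℤ)+j)) * key
        · rw [gbz_out (m+1) (by omega)]; ring)]
    rw [Wsum, Finset.mul_sum]
    exact Finset.sum_congr rfl (fun j _ => by beta_reduce; ring)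
  have hS4 : (∑ j ∈ Finset.Icc (-((m+1:ℕ):ℤ)-3) (((m+1:ℕ):ℤ)+3),
      sg j * (PowerSeries.X : PowerSeries ℤ) ^ ((j^2).toNat)
        * ((PowerSeries.X : PowerSeries ℤ) ^ ((2*(((m+1:ℕ):ℤ)+1+j)).toNat)
           * (PowerSeries.X : PowerSeries ℤ) ^ ((2*(((m+1:ℕ):ℤ)+1+j)).toNat)
           * gbz (2*(m+1)) (((m+1:ℕ):ℤ)+1+j)))
      = -((PowerSeries.X : PowerSeries ℤ)^(4*m+4) * Wsum (m+1)) := by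
    rw [sum_T (m+1) 1 (by norm_num) (by norm_num) _
      (fun i => -((PowerSeries.X : PowerSeries ℤ)^(4*m+4)
        * (sg i * (PowerSeries.X : PowerSeries ℤ) ^ (((i+1)^2).toNat))))
      (fun j => by
        beta_reduce
        rw [show ((m+1:ℕ):ℤ)+1+j = ((m+1:ℕ):ℤ)+(j+1) by ring, sg_add_one]
        by_cases hj : -(((m+1:ℕ):ℤ)) ≤ j+1 ∧ j+1 ≤ ((m+1:ℕ):ℤ)
        · have key : (PowerSeries.X : PowerSeries ℤ)^((j^2).toNat)
              * ((PowerSeries.X : PowerSeries ℤ)^((2*(((m+1:ℕ):ℤ)+(j+1))).toNat)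
                 * (PowerSeries.X : PowerSeries ℤ)^((2*(((m+1:ℕ):ℤ)+(j+1))).toNat))
              = (PowerSeries.X : PowerSeries ℤ)^(4*m+4)
              * (PowerSeries.X : PowerSeries ℤ)^(((j+1+1)^2).toNat) := by
            rw [← pow_add, ← pow_add, ← pow_add]; congr 1
            have e1 : (j+1+1)^2 = j^2 + 4*j + 4 := by ring
            have e2 : (0:ℤ) ≤ j^2 := sq_nonneg j
            have e3 : (0:ℤ) ≤ (j+1+1)^2 := sq_nonneg (j+1+1)
            omega
          linear_combination (sg j * gbz (2*(m+1)) (((m+1:ℕ):ℤ)+(j+1))) * key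
        · rw [gbz_out (m+1) (by omega)]; ring)]
    rw [Wsum, Finset.mul_sum, ← Finset.sum_neg_distrib]
    exact Finset.sum_congr rfl (fun j _ => by beta_reduce; ring)
  rw [main, hS1, hS2, hS3, hS4]
  ring


lemma recW (m : ℕ) :
    Wsum (m+2) = -(1 - (PowerSeries.X : PowerSeries ℤ)^(2*m+3))
      * (1 - (PowerSeries.X : PowerSeries ℤ)^(2*m+5)) * Ssum (m+1) := by
  have hset : Finset.Icc (-((m+2:ℕ):ℤ)-2) (((m+2:ℕ):ℤ)+2)
      = Finset.Icc (-((m+1:ℕ):ℤ)-3) (((m+1:ℕ):ℤ)+3) := by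
    congr 1 <;> push_cast <;> ring
  have hMz : ((m+2:ℕ):ℤ) = ((m+1:ℕ):ℤ) + 1 := by push_cast; ring
  have h2m : 2*(m+2) = 2*(m+1)+2 := by ring
  have main : Wsum (m+2) =
      (∑ j ∈ Finset.Icc (-((m+1:ℕ):ℤ)-3) (((m+1:ℕ):ℤ)+3),
        sg j * (PowerSeries.X : PowerSeries ℤ) ^ (((j+1)^2).toNat)
          * ((PowerSeries.X : PowerSeries ℤ) ^ ((2*(((m+1:ℕ):ℤ)+1-j)).toNat)
             * (PowerSeries.X : PowerSeries ℤ) ^ ((2*(((m+1:ℕ):ℤ)+1-j)).toNat)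
             * gbz (2*(m+1)) (((m+1:ℕ):ℤ)+1+j-2)))
    + ((∑ j ∈ Finset.Icc (-((m+1:ℕ):ℤ)-3) (((m+1:ℕ):ℤ)+3),
        sg j * (PowerSeries.X : PowerSeries ℤ) ^ (((j+1)^2).toNat)
          * ((PowerSeries.X : PowerSeries ℤ) ^ ((2*(((m+1:ℕ):ℤ)+1-j)).toNat)
             * gbz (2*(m+1)) (((m+1:ℕ):ℤ)+1+j-1)))
    + ((∑ j ∈ Finset.Icc (-((m+1:ℕ):ℤ)-3) (((m+1:ℕ):ℤ)+3),
        sg j * (PowerSeries.X : PowerSeries ℤ) ^ (((j+1)^2).toNat)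
          * ((PowerSeries.X : PowerSeries ℤ) ^ ((2*(((m+1:ℕ):ℤ)-j)).toNat)
             * gbz (2*(m+1)) (((m+1:ℕ):ℤ)+1+j-1)))
    + (∑ j ∈ Finset.Icc (-((m+1:ℕ):ℤ)-3) (((m+1:ℕ):ℤ)+3),
        sg j * (PowerSeries.X : PowerSeries ℤ) ^ (((j+1)^2).toNat)
          * gbz (2*(m+1)) (((m+1:ℕ):ℤ)+1+j)))) := by
    rw [Wsum, hset, h2m, hMz]
    rw [← Finset.sum_add_distrib, ← Finset.sum_add_distrib, ← Finset.sum_add_distrib]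
    refine Finset.sum_congr rfl (fun j hj => ?_)
    rw [gbz_pascal2_sq (2*(m+1)) (((m+1:ℕ):ℤ)+1+j),
      show ((2*(m+1):ℕ):ℤ)+2-(((m+1:ℕ):ℤ)+1+j) = ((m+1:ℕ):ℤ)+1-j by push_cast; ring,
      show ((2*(m+1):ℕ):ℤ)+1-(((m+1:ℕ):ℤ)+1+j) = ((m+1:ℕ):ℤ)-j by push_cast; ring]
    ring
  have hW1 : (∑ j ∈ Finset.Icc (-((m+1:ℕ):ℤ)-3) (((m+1:ℕ):ℤ)+3),
      sg j * (PowerSeries.X : PowerSeries ℤ) ^ (((j+1)^2).toNat)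
        * ((PowerSeries.X : PowerSeries ℤ) ^ ((2*(((m+1:ℕ):ℤ)+1-j)).toNat)
           * (PowerSeries.X : PowerSeries ℤ) ^ ((2*(((m+1:ℕ):ℤ)+1-j)).toNat)
           * gbz (2*(m+1)) (((m+1:ℕ):ℤ)+1+j-2)))
      = -((PowerSeries.X : PowerSeries ℤ)^(4*m+8) * Ssum (m+1)) := by
    rw [sum_T (m+1) (-1) (by norm_num) (by norm_num) _
      (fun i => -((PowerSeries.X : PowerSeries ℤ)^(4*m+8)
        * (sg i * (PowerSeries.X : PowerSeries ℤ) ^ ((i^2).toNat))))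
      (fun j => by
        beta_reduce
        rw [show j + (-1:ℤ) = j - 1 by ring, sg_sub_one,
          show ((m+1:ℕ):ℤ)+1+j-2 = ((m+1:ℕ):ℤ)+(j-1) by ring]
        by_cases hj : -(((m+1:ℕ):ℤ)) ≤ j-1 ∧ j-1 ≤ ((m+1:ℕ):ℤ)
        · have key : (PowerSeries.X : PowerSeries ℤ)^(((j+1)^2).toNat)
              * ((PowerSeries.X : PowerSeries ℤ)^((2*(((m+1:ℕ):ℤ)+1-j)).toNat)
                 * (PowerSeries.X : PowerSeries ℤ)^((2*(((m+1:ℕ):ℤ)+1-j)).toNat))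
              = (PowerSeries.X : PowerSeries ℤ)^(4*m+8)
              * (PowerSeries.X : PowerSeries ℤ)^(((j-1)^2).toNat) := by
            rw [← pow_add, ← pow_add, ← pow_add]; congr 1
            have f1 : (j+1)^2 = (j-1)^2 + 4*j := by ring
            have f2 : (0:ℤ) ≤ (j-1)^2 := sq_nonneg (j-1)
            have f3 : (0:ℤ) ≤ (j+1)^2 := sq_nonneg (j+1)
            omega
          linear_combination (sg j * gbz (2*(m+1)) (((m+1:ℕ):ℤ)+(j-1))) * key
        · rw [gbz_out (m+1) (by omega)]; ring)]
    rw [Ssum, Finset.mul_sum, ← Finset.sum_neg_distrib]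
    exact Finset.sum_congr rfl (fun j _ => by beta_reduce; ring)
  have hW2 : (∑ j ∈ Finset.Icc (-((m+1:ℕ):ℤ)-3) (((m+1:ℕ):ℤ)+3),
      sg j * (PowerSeries.X : PowerSeries ℤ) ^ (((j+1)^2).toNat)
        * ((PowerSeries.X : PowerSeries ℤ) ^ ((2*(((m+1:ℕ):ℤ)+1-j)).toNat)
           * gbz (2*(m+1)) (((m+1:ℕ):ℤ)+1+j-1)))
      = (PowerSeries.X : PowerSeries ℤ)^(2*m+5) * Ssum (m+1) := by
    rw [sum_T0 (m+1) _
      (fun i => (PowerSeries.X : PowerSeries ℤ)^(2*m+5)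
        * (sg i * (PowerSeries.X : PowerSeries ℤ) ^ ((i^2).toNat)))
      (fun j => by
        beta_reduce
        rw [show ((m+1:ℕ):ℤ)+1+j-1 = ((m+1:ℕ):ℤ)+j by ring]
        by_cases hj : -(((m+1:ℕ):ℤ)) ≤ j ∧ j ≤ ((m+1:ℕ):ℤ)
        · have key : (PowerSeries.X : PowerSeries ℤ)^(((j+1)^2).toNat)
              * (PowerSeries.X : PowerSeries ℤ)^((2*(((m+1:ℕ):ℤ)+1-j)).toNat)
              = (PowerSeries.X : PowerSeries ℤ)^(2*m+5)
              * (PowerSeries.X : PowerSeries ℤ)^((j^2).toNat) := by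
            rw [← pow_add, ← pow_add]; congr 1
            have f1 : (j+1)^2 = j^2 + 2*j + 1 := by ring
            have f2 : (0:ℤ) ≤ j^2 := sq_nonneg j
            have f3 : (0:ℤ) ≤ (j+1)^2 := sq_nonneg (j+1)
            omega
          linear_combination (sg j * gbz (2*(m+1)) (((m+1:ℕ):ℤ)+j)) * key
        · rw [gbz_out (m+1) (by omega)]; ring)]
    rw [Ssum, Finset.mul_sum]
    exact Finset.sum_congr rfl (fun j _ => by beta_reduce; ring)
  have hW3 : (∑ j ∈ Finset.Icc (-((m+1:ℕ):ℤ)-3) (((m+1:ℕ):ℤ)+3),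
      sg j * (PowerSeries.X : PowerSeries ℤ) ^ (((j+1)^2).toNat)
        * ((PowerSeries.X : PowerSeries ℤ) ^ ((2*(((m+1:ℕ):ℤ)-j)).toNat)
           * gbz (2*(m+1)) (((m+1:ℕ):ℤ)+1+j-1)))
      = (PowerSeries.X : PowerSeries ℤ)^(2*m+3) * Ssum (m+1) := by
    rw [sum_T0 (m+1) _
      (fun i => (PowerSeries.X : PowerSeries ℤ)^(2*m+3)
        * (sg i * (PowerSeries.X : PowerSeries ℤ) ^ ((i^2).toNat)))
      (fun j => by
        beta_reduce
        rw [show ((m+1:ℕ):ℤ)+1+j-1 = ((m+1:ℕ):ℤ)+j by ring]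
        by_cases hj : -(((m+1:ℕ):ℤ)) ≤ j ∧ j ≤ ((m+1:ℕ):ℤ)
        · have key : (PowerSeries.X : PowerSeries ℤ)^(((j+1)^2).toNat)
              * (PowerSeries.X : PowerSeries ℤ)^((2*(((m+1:ℕ):ℤ)-j)).toNat)
              = (PowerSeries.X : PowerSeries ℤ)^(2*m+3)
              * (PowerSeries.X : PowerSeries ℤ)^((j^2).toNat) := by
            rw [← pow_add, ← pow_add]; congr 1
            have f1 : (j+1)^2 = j^2 + 2*j + 1 := by ring
            have f2 : (0:ℤ) ≤ j^2 := sq_nonneg j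
            have f3 : (0:ℤ) ≤ (j+1)^2 := sq_nonneg (j+1)
            omega
          linear_combination (sg j * gbz (2*(m+1)) (((m+1:ℕ):ℤ)+j)) * key
        · rw [gbz_out (m+1) (by omega)]; ring)]
    rw [Ssum, Finset.mul_sum]
    exact Finset.sum_congr rfl (fun j _ => by beta_reduce; ring)
  have hW4 : (∑ j ∈ Finset.Icc (-((m+1:ℕ):ℤ)-3) (((m+1:ℕ):ℤ)+3),
      sg j * (PowerSeries.X : PowerSeries ℤ) ^ (((j+1)^2).toNat)
        * gbz (2*(m+1)) (((m+1:ℕ):ℤ)+1+j))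
      = -Ssum (m+1) := by
    rw [sum_T (m+1) 1 (by norm_num) (by norm_num) _
      (fun i => -(sg i * (PowerSeries.X : PowerSeries ℤ) ^ ((i^2).toNat)))
      (fun j => by
        beta_reduce
        rw [show ((m+1:ℕ):ℤ)+1+j = ((m+1:ℕ):ℤ)+(j+1) by ring, sg_add_one]
        ring)]
    rw [Ssum, ← Finset.sum_neg_distrib]
    exact Finset.sum_congr rfl (fun j _ => by beta_reduce; ring)
  rw [main, hW1, hW2, hW3, hW4]
  ring


noncomputable def Od (M : ℕ) : PowerSeries ℤ :=
  ∏ i ∈ Finset.range M, (1 - (PowerSeries.X : PowerSeries ℤ) ^ (2*i+1))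

lemma Ssum_one : Ssum 1 = Od 1 ^ 2 := by
  have h3 : gbz 2 (1:ℤ) = 1 + (PowerSeries.X : PowerSeries ℤ)^2 := by
    have hd : gbz 1 (1:ℤ) = 1 := by have := gbz_diag 1; norm_num at this; exact this
    rw [show (2:ℕ) = 1+1 from rfl, gbz_succ]
    norm_num [hd, gbz_zero, show ((2:ℤ)).toNat = 2 from rfl]
  have h4 : gbz 2 (2:ℤ) = 1 := by have := gbz_diag 2; norm_num at this; exact this
  have hIcc : Finset.Icc (-((1:ℕ):ℤ)-2) (((1:ℕ):ℤ)+2)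
      = ({-3,-2,-1,0,1,2,3} : Finset ℤ) := by decide
  rw [Ssum, hIcc, Od]
  rw [Finset.sum_insert (by decide), Finset.sum_insert (by decide),
    Finset.sum_insert (by decide), Finset.sum_insert (by decide),
    Finset.sum_insert (by decide), Finset.sum_insert (by decide),
    Finset.sum_singleton, Finset.prod_range_one]
  norm_num [sg, h3, h4, gbz_zero, show ((2:ℤ)).toNat = 2 from rfl,
    show ((4:ℤ)).toNat = 4 from rfl, show ((9:ℤ)).toNat = 9 from rfl,
    show ((16:ℤ)).toNat = 16 from rfl, show ((1:ℤ)).toNat = 1 from rfl,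
    gbz_neg 2 (-2) (by norm_num), gbz_neg 2 (-1) (by norm_num),
    gbz_gt 2 3 (by norm_num), gbz_gt 2 4 (by norm_num)]
  ring

lemma Wsum_one : Wsum 1 = -(1 - (PowerSeries.X : PowerSeries ℤ)^(2*0+1))
    * (1 - (PowerSeries.X : PowerSeries ℤ)^(2*0+3)) * Od 0 ^ 2 := by
  have h3 : gbz 2 (1:ℤ) = 1 + (PowerSeries.X : PowerSeries ℤ)^2 := by
    have hd : gbz 1 (1:ℤ) = 1 := by have := gbz_diag 1; norm_num at this; exact this
    rw [show (2:ℕ) = 1+1 from rfl, gbz_succ]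
    norm_num [hd, gbz_zero, show ((2:ℤ)).toNat = 2 from rfl]
  have h4 : gbz 2 (2:ℤ) = 1 := by have := gbz_diag 2; norm_num at this; exact this
  have hIcc : Finset.Icc (-((1:ℕ):ℤ)-2) (((1:ℕ):ℤ)+2)
      = ({-3,-2,-1,0,1,2,3} : Finset ℤ) := by decide
  rw [Wsum, hIcc, Od]
  rw [Finset.sum_insert (by decide), Finset.sum_insert (by decide),
    Finset.sum_insert (by decide), Finset.sum_insert (by decide),
    Finset.sum_insert (by decide), Finset.sum_insert (by decide),
    Finset.sum_singleton, Finset.range_zero, Finset.prod_empty]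
  norm_num [sg, h3, h4, gbz_zero, show ((2:ℤ)).toNat = 2 from rfl,
    show ((4:ℤ)).toNat = 4 from rfl, show ((9:ℤ)).toNat = 9 from rfl,
    show ((16:ℤ)).toNat = 16 from rfl, show ((1:ℤ)).toNat = 1 from rfl,
    gbz_neg 2 (-2) (by norm_num), gbz_neg 2 (-1) (by norm_num),
    gbz_gt 2 3 (by norm_num), gbz_gt 2 4 (by norm_num)]
  ring

lemma SW_closed : ∀ m : ℕ, Ssum (m+1) = Od (m+1) ^ 2 ∧
    Wsum (m+1) = -(1 - (PowerSeries.X : PowerSeries ℤ)^(2*m+1))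
      * (1 - (PowerSeries.X : PowerSeries ℤ)^(2*m+3)) * Od m ^ 2 := by
  intro m
  induction m with
  | zero => exact ⟨Ssum_one, Wsum_one⟩
  | succ m ih =>
    have hOd : Od (m+2) = Od m * (1 - (PowerSeries.X : PowerSeries ℤ)^(2*m+1))
        * (1 - (PowerSeries.X : PowerSeries ℤ)^(2*m+3)) := by
      rw [Od, Finset.prod_range_succ, Finset.prod_range_succ, ← Od,
        show 2*(m+1)+1 = 2*m+3 by ring]
    constructor
    · rw [recS m, ih.2, hOd]
      ring
    · rw [recW m, ih.1, show 2*(m+1)+1 = 2*m+3 by ring, show 2*(m+1)+3 = 2*m+5 by ring]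


lemma Ssum_closed (m : ℕ) : Ssum (m+1) = Od (m+1) ^ 2 := (SW_closed m).1

lemma md_congr {N : ℕ} {A B A' B' : PowerSeries ℤ} (hA : A = A') (hB : B = B')
    (h : md N A' B') : md N A B := hA ▸ hB ▸ h

lemma md_X_factor {N : ℕ} {k : ℕ} (hk : N < k) (A B : PowerSeries ℤ) :
    md N ((PowerSeries.X : PowerSeries ℤ)^k * A) ((PowerSeries.X : PowerSeries ℤ)^k * B) :=
  md_of_dvd hk ⟨A - B, by ring⟩

lemma constCoeff_one_sub_pow (k : ℕ) (hk : 0 < k) :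
    PowerSeries.constantCoeff (R := ℤ) (1 - (PowerSeries.X : PowerSeries ℤ)^k) = 1 := by
  simp [zero_pow (by omega : k ≠ 0)]

lemma constCoeff_EvP (m : ℕ) : PowerSeries.constantCoeff (R := ℤ) (EvP m) = 1 := by
  rw [EvP, map_prod]
  rw [Finset.prod_eq_one]
  intro i _
  exact constCoeff_one_sub_pow _ (by omega)

lemma EvP_mul_inv (m : ℕ) :
    EvP m * PowerSeries.invOfUnit (EvP m) 1 = 1 :=
  PowerSeries.mul_invOfUnit (EvP m) 1 (by simpa using constCoeff_EvP m)

lemma md_prod_tail (N : ℕ) (f : ℕ → PowerSeries ℤ) (a b : ℕ) (hab : a ≤ b)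
    (h : ∀ i, a ≤ i → i < b → md N (f i) 1) :
    md N (∏ i ∈ Finset.range b, f i) (∏ i ∈ Finset.range a, f i) := by
  induction b, hab using Nat.le_induction with
  | base => exact md_refl N _
  | succ b hab ih =>
    have h1 : md N (∏ i ∈ Finset.range b, f i) (∏ i ∈ Finset.range a, f i) :=
      ih (fun i hi hib => h i hi (by omega))
    have h2 : md N (f b) 1 := h b hab (by omega)
    have := md_mul h1 h2
    rw [mul_one] at this
    exact md_congr (Finset.prod_range_succ f b) rfl this

lemma md_EvP_tail {N a b : ℕ} (hab : a ≤ b) (ha : N < 2*a+2) :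
    md N (EvP b) (EvP a) := by
  apply md_prod_tail N _ a b hab
  intro i hi _
  exact md_one_sub_X_pow (by omega)

/-- key per-term congruence: `gbz (2M) (M+j) ≡ U` modulo `X^{N+1}`, when `j² ≤ N`,
`M = N+1`, `U` the inverse of `EvP (2M)`. -/
lemma gbz_md_U (N : ℕ) (j : ℤ) (hj : (j^2).toNat ≤ N) :
    md N (gbz (2*(N+1)) (((N+1:ℕ):ℤ)+j))
      (PowerSeries.invOfUnit (EvP (2*(N+1))) 1) := by
  set M : ℕ := N+1 with hM
  set U := PowerSeries.invOfUnit (EvP (2*M)) 1 with hU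
  have hj2 : j^2 ≤ (N:ℤ) := by omega
  have h2j : 2*j ≤ (N:ℤ)+1 ∧ -((N:ℤ)+1) ≤ 2*j := by
    constructor <;> nlinarith [sq_nonneg (j-1), sq_nonneg (j+1)]
  have hjM : -(M:ℤ) < j ∧ j < (M:ℤ) := by
    constructor <;> [push_cast; push_cast] <;> omega
  set k : ℕ := ((M:ℤ)+j).toNat with hk
  have hkcast : ((k:ℕ):ℤ) = (M:ℤ)+j := by
    rw [hk, Int.toNat_of_nonneg (by omega)]
  have hkle : k ≤ 2*M := by omega
  have hexact : gbz (2*M) ((M:ℤ)+j) * EvP k * EvP (2*M - k) = EvP (2*M) := by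
    have := gbz_mul_EvP (2*M) k hkle
    rwa [hkcast] at this
  have hmd1 : md N (EvP k) (EvP (2*M)) := by
    apply md_symm
    apply md_EvP_tail (by omega)
    omega
  have hmd2 : md N (EvP (2*M - k)) (EvP (2*M)) := by
    apply md_symm
    apply md_EvP_tail (by omega)
    omega
  -- gbz * EvP k * EvP (2M-k) * U * U  ≡  gbz * EvP2M * EvP2M * U * U = gbz
  have main : md N (gbz (2*M) ((M:ℤ)+j) * EvP k * EvP (2*M-k) * U * U)
      (gbz (2*M) ((M:ℤ)+j) * EvP (2*M) * EvP (2*M) * U * U) := by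
    apply md_mul_right
    apply md_mul_right
    exact md_mul (md_mul (md_refl N _) hmd1) hmd2
  have e1 : gbz (2*M) ((M:ℤ)+j) * EvP k * EvP (2*M-k) * U * U = EvP (2*M) * U * U := by
    rw [hexact]
  have e2 : gbz (2*M) ((M:ℤ)+j) * EvP (2*M) * EvP (2*M) * U * U
      = gbz (2*M) ((M:ℤ)+j) := by
    have h := EvP_mul_inv (2*M)
    calc gbz (2*M) ((M:ℤ)+j) * EvP (2*M) * EvP (2*M) * U * U
        = gbz (2*M) ((M:ℤ)+j) * ((EvP (2*M) * U) * (EvP (2*M) * U)) := by ring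
      _ = gbz (2*M) ((M:ℤ)+j) := by rw [h]; ring
  have e3 : EvP (2*M) * U * U = U := by
    rw [EvP_mul_inv (2*M), one_mul]
  have final : md N U (gbz (2*M) ((M:ℤ)+j)) :=
    md_congr (by rw [e1, e3]) e2.symm main
  exact md_symm final


lemma Ssum_md (N : ℕ) :
    md N (Ssum (N+1))
      ((∑ j ∈ Finset.Icc (-((N+1:ℕ):ℤ)-2) (((N+1:ℕ):ℤ)+2),
          sg j * (PowerSeries.X : PowerSeries ℤ) ^ ((j^2).toNat))
        * PowerSeries.invOfUnit (EvP (2*(N+1))) 1) := by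
  rw [Ssum, Finset.sum_mul]
  apply md_sum
  intro j _
  by_cases hj : (j^2).toNat ≤ N
  · exact md_mul_left _ (gbz_md_U N j hj)
  · refine md_congr (show _ = (PowerSeries.X : PowerSeries ℤ)^((j^2).toNat)
        * (sg j * gbz (2*(N+1)) (((N+1:ℕ):ℤ)+j)) by ring)
      (show _ = (PowerSeries.X : PowerSeries ℤ)^((j^2).toNat)
        * (sg j * PowerSeries.invOfUnit (EvP (2*(N+1))) 1) by ring) ?_
    exact md_X_factor (by omega) _ _

lemma sg_neg_idx (j : ℤ) : sg (-j) = sg j := by simp [sg]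

lemma sg_natC (k : ℕ) : sg (k:ℤ) = PowerSeries.C (R := ℤ) ((-1:ℤ)^k) := by
  rcases Nat.even_or_odd k with h | h
  · rw [sg, if_pos ((Int.even_coe_nat k).mpr h), h.neg_one_pow, map_one]
  · rw [sg, if_neg (by simpa [Int.even_coe_nat] using (Nat.not_even_iff_odd.mpr h)),
      h.neg_one_pow, map_neg, map_one]

lemma fold (B : ℕ) :
    ∑ j ∈ Finset.Icc (-(B:ℤ)) (B:ℤ), sg j * (PowerSeries.X : PowerSeries ℤ) ^ ((j^2).toNat)
      = 1 + ∑ k ∈ Finset.range B,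
          PowerSeries.C (R := ℤ) (2 * (-1:ℤ)^(k+1)) * (PowerSeries.X : PowerSeries ℤ) ^ ((k+1)^2) := by
  induction B with
  | zero =>
    norm_num [Finset.Icc_self, sg]
  | succ B ih =>
    have hIns : Finset.Icc (-((B+1:ℕ):ℤ)) ((B+1:ℕ):ℤ)
        = insert (-((B+1:ℕ):ℤ)) (insert ((B+1:ℕ):ℤ) (Finset.Icc (-(B:ℤ)) (B:ℤ))) := by
      ext x
      simp only [Finset.mem_Icc, Finset.mem_insert]
      push_cast
      omega
    rw [hIns, Finset.sum_insert (by
        simp only [Finset.mem_insert, Finset.mem_Icc]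
        push_cast
        omega),
      Finset.sum_insert (by
        simp only [Finset.mem_Icc]
        push_cast
        omega),
      ih, Finset.sum_range_succ]
    rw [sg_neg_idx, sg_natC (B+1)]
    have hexp : (((-((B+1:ℕ):ℤ)))^2).toNat = (B+1)^2 := by
      have : ((-((B+1:ℕ):ℤ)))^2 = (((B+1)^2 : ℕ) : ℤ) := by push_cast; ring
      rw [this, Int.toNat_natCast]
    have hexp2 : ((((B+1:ℕ):ℤ))^2).toNat = (B+1)^2 := by
      have : (((B+1:ℕ):ℤ))^2 = (((B+1)^2 : ℕ) : ℤ) := by push_cast; ring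
      rw [this, Int.toNat_natCast]
    rw [hexp, hexp2]
    have hC : PowerSeries.C (R := ℤ) (2 * (-1:ℤ)^(B+1))
        = PowerSeries.C (R := ℤ) ((-1:ℤ)^(B+1)) + PowerSeries.C (R := ℤ) ((-1:ℤ)^(B+1)) := by
      rw [← map_add]
      congr 1
      ring
    rw [hC]
    ring

lemma negOnePowSq (t : ℕ) : ((-1:ℤ))^(t^2) = (-1)^t := by
  rcases Nat.even_or_odd t with h | h
  · rw [h.neg_one_pow, Even.neg_one_pow (by rw [Nat.even_pow]; exact ⟨h, by norm_num⟩)]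
  · rw [h.neg_one_pow, Odd.neg_one_pow (h.pow)]

lemma theta_md (N : ℕ) :
    md N (∑ j ∈ Finset.Icc (-((N+1:ℕ):ℤ)-2) (((N+1:ℕ):ℤ)+2),
        sg j * (PowerSeries.X : PowerSeries ℤ) ^ ((j^2).toNat)) phiNeg := by
  have hb : Finset.Icc (-((N+1:ℕ):ℤ)-2) (((N+1:ℕ):ℤ)+2)
      = Finset.Icc (-((N+3:ℕ):ℤ)) ((N+3:ℕ):ℤ) := by
    congr 1 <;> push_cast <;> ring
  rw [hb, fold (N+3), md, PowerSeries.X_pow_dvd_iff]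
  intro i hi
  rw [map_sub, sub_eq_zero, map_add, map_sum]
  rw [phiNeg, PowerSeries.coeff_mk]
  have hterm : ∀ k, PowerSeries.coeff (R := ℤ) i
      (PowerSeries.C (R := ℤ) (2 * (-1:ℤ)^(k+1)) * (PowerSeries.X : PowerSeries ℤ) ^ ((k+1)^2))
      = if i = (k+1)^2 then 2 * (-1:ℤ)^(k+1) else 0 := by
    intro k
    rw [PowerSeries.coeff_C_mul, PowerSeries.coeff_X_pow]
    split_ifs <;> ring
  rcases eq_or_ne i 0 with rfl | hi0
  · rw [if_pos rfl]
    rw [show PowerSeries.coeff (R := ℤ) 0 (1 : PowerSeries ℤ) = 1 by simp]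
    rw [Finset.sum_eq_zero (fun k _ => by rw [hterm k, if_neg (by positivity)]), add_zero]
  · rw [if_neg hi0]
    rw [show PowerSeries.coeff (R := ℤ) i (1 : PowerSeries ℤ) = 0 by simp [hi0]]
    rw [zero_add]
    by_cases hsq : ∃ t : ℕ, 0 < t ∧ i = t^2
    · obtain ⟨t, ht, rfl⟩ := hsq
      rw [if_pos ⟨t, ht, rfl⟩]
      rw [Finset.sum_eq_single (t-1)]
      · rw [hterm, show t - 1 + 1 = t by omega, if_pos rfl, negOnePowSq]
      · intro k _ hk
        rw [hterm, if_neg]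
        intro hcon
        exact hk (by
          have : k + 1 = t := Nat.pow_left_injective (by norm_num) hcon.symm
          omega)
      · intro habs
        exfalso
        apply habs
        rw [Finset.mem_range]
        have h1 : t ≤ t^2 := Nat.le_self_pow (by norm_num) t
        omega
    · rw [if_neg hsq]
      apply Finset.sum_eq_zero
      intro k _
      rw [hterm, if_neg (fun hcon => hsq ⟨k+1, by omega, hcon⟩)]

noncomputable def Pfull (L : ℕ) : PowerSeries ℤ :=
  ∏ i ∈ Finset.range L, (1 - (PowerSeries.X : PowerSeries ℤ) ^ (i+1))

lemma P_split : ∀ M : ℕ, Pfull (2*M) = Od M * EvP M := by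
  intro M
  induction M with
  | zero => simp [Pfull, Od, EvP]
  | succ M ih =>
    have h2 : 2*(M+1) = (2*M+1)+1 := by ring
    rw [Od, EvP, Finset.prod_range_succ, Finset.prod_range_succ, ← Od, ← EvP,
      Pfull, h2, Finset.prod_range_succ, Finset.prod_range_succ, ← Pfull, ih]
    ring_nf

lemma gauss_md (N : ℕ) :
    md N (Pfull (N+1) ^ 2) (phiNeg * EvP (N+1)) := by
  set M : ℕ := N + 1 with hM
  have hOd : md N (Od M ^ 2)
      (phiNeg * PowerSeries.invOfUnit (EvP (2*M)) 1) := by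
    have h1 := Ssum_md N
    have h2 := md_mul_right (PowerSeries.invOfUnit (EvP (2*M)) 1) (theta_md N)
    rw [← Ssum_closed N]
    exact md_trans h1 h2
  have hPf : md N (Pfull (2*M)) (Pfull M) := by
    apply md_prod_tail N _ M (2*M) (by omega)
    intro i hi _
    exact md_one_sub_X_pow (by omega)
  have hEv : md N (EvP M) (EvP (2*M)) := md_symm (md_EvP_tail (by omega) (by omega))
  have step1 : md N (Pfull M ^ 2) (Pfull (2*M) ^ 2) := md_pow (md_symm hPf) 2
  have step2 : Pfull (2*M) ^ 2 = Od M ^ 2 * EvP M ^ 2 := by rw [P_split M]; ring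
  have step3 : md N (Od M ^ 2 * EvP M ^ 2)
      ((phiNeg * PowerSeries.invOfUnit (EvP (2*M)) 1) * (EvP (2*M) * EvP (2*M))) := by
    apply md_mul hOd
    have := md_mul hEv hEv
    exact md_congr (by ring) rfl this
  have step4 : (phiNeg * PowerSeries.invOfUnit (EvP (2*M)) 1) * (EvP (2*M) * EvP (2*M))
      = phiNeg * EvP (2*M) := by
    have h := EvP_mul_inv (2*M)
    calc (phiNeg * PowerSeries.invOfUnit (EvP (2*M)) 1) * (EvP (2*M) * EvP (2*M))
        = phiNeg * (EvP (2*M) * PowerSeries.invOfUnit (EvP (2*M)) 1) * EvP (2*M) := by ring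
      _ = phiNeg * EvP (2*M) := by rw [h]; ring
  have step5 : md N (phiNeg * EvP (2*M)) (phiNeg * EvP M) :=
    md_mul_left _ (md_symm hEv)
  exact md_trans step1 (md_congr step2 rfl
    (md_trans step3 (md_congr step4 rfl step5)))

/-- product of the geometric-series inverses -/
noncomputable def Wprod (L : ℕ) : PowerSeries ℤ :=
  ∏ k ∈ Finset.range L,
    PowerSeries.invOfUnit (1 - (PowerSeries.X : PowerSeries ℤ) ^ (k+1)) 1

lemma Pfull_mul_Wprod (L : ℕ) : Pfull L * Wprod L = 1 := by
  rw [Pfull, Wprod, ← Finset.prod_mul_distrib]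
  apply Finset.prod_eq_one
  intro k _
  exact PowerSeries.mul_invOfUnit _ 1 (by simpa using constCoeff_one_sub_pow (k+1) (by omega))

lemma constCoeff_phiNeg : PowerSeries.constantCoeff (R := ℤ) phiNeg = 1 := by
  rw [← PowerSeries.coeff_zero_eq_constantCoeff_apply, phiNeg, PowerSeries.coeff_mk]
  simp

noncomputable def phiInv : PowerSeries ℤ := PowerSeries.invOfUnit phiNeg 1

lemma phiNeg_mul_phiInv : phiNeg * phiInv = 1 :=
  PowerSeries.mul_invOfUnit _ 1 (by simpa using constCoeff_phiNeg)

lemma overGF_coeff (t m : ℕ) :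
    PowerSeries.coeff (R := ℤ) m (overGF t) =
      PowerSeries.coeff (R := ℤ) m (∏ k ∈ Finset.range (m+1),
        ((1 - (PowerSeries.X : PowerSeries ℤ) ^ (2 * (k + 1))) ^ t *
          (PowerSeries.invOfUnit (1 - (PowerSeries.X : PowerSeries ℤ) ^ (k + 1)) 1) ^ (2 * t))) := by
  rw [overGF, seriesProd, PowerSeries.coeff_mk]

lemma prod_factor (t L : ℕ) :
    (∏ k ∈ Finset.range L,
      ((1 - (PowerSeries.X : PowerSeries ℤ) ^ (2 * (k + 1))) ^ t *
        (PowerSeries.invOfUnit (1 - (PowerSeries.X : PowerSeries ℤ) ^ (k + 1)) 1) ^ (2 * t)))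
      = EvP L ^ t * Wprod L ^ (2*t) := by
  have hE : EvP L = ∏ k ∈ Finset.range L,
      (1 - (PowerSeries.X : PowerSeries ℤ)^(2*(k+1))) :=
    Finset.prod_congr rfl (fun k _ => by rw [show 2*k+2 = 2*(k+1) by ring])
  rw [Finset.prod_mul_distrib, Finset.prod_pow, Finset.prod_pow, hE, Wprod]

lemma phiInv_md (m : ℕ) :
    md m (phiInv ^ t) (EvP (m+1) ^ t * Wprod (m+1) ^ (2*t)) := by
  have g := gauss_md m
  have h1 := md_mul_right (Wprod (m+1)^2 * phiInv) g
  have e1 : Pfull (m+1)^2 * (Wprod (m+1)^2 * phiInv) = phiInv := by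
    have h := Pfull_mul_Wprod (m+1)
    calc Pfull (m+1)^2 * (Wprod (m+1)^2 * phiInv)
        = (Pfull (m+1) * Wprod (m+1))^2 * phiInv := by ring
      _ = phiInv := by rw [h]; ring
  have e2 : phiNeg * EvP (m+1) * (Wprod (m+1)^2 * phiInv)
      = EvP (m+1) * Wprod (m+1)^2 := by
    have h := phiNeg_mul_phiInv
    calc phiNeg * EvP (m+1) * (Wprod (m+1)^2 * phiInv)
        = (phiNeg * phiInv) * (EvP (m+1) * Wprod (m+1)^2) := by ring
      _ = EvP (m+1) * Wprod (m+1)^2 := by rw [h]; ring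
  have h2 : md m phiInv (EvP (m+1) * Wprod (m+1)^2) :=
    md_congr e1.symm e2.symm h1
  have h3 := md_pow h2 t
  exact md_trans h3 (md_congr (by rw [mul_pow, ← pow_mul]) rfl (md_refl m _))

lemma coeff_overGF_eq_phiInv_pow (t m : ℕ) :
    PowerSeries.coeff (R := ℤ) m (overGF t) = PowerSeries.coeff (R := ℤ) m (phiInv ^ t) := by
  rw [overGF_coeff t m, prod_factor t (m+1)]
  exact (md_coeff (phiInv_md (t := t) m) (le_refl m)).symm


noncomputable def Eser : PowerSeries ℤ :=
  PowerSeries.mk fun i => if ∃ k : ℕ, 0 < k ∧ i = k ^ 2 then (-1:ℤ)^(i+1) else 0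

lemma phiNeg_eq : phiNeg = 1 - 2 * Eser := by
  ext i
  have h2 : (2 : PowerSeries ℤ) = PowerSeries.C (R := ℤ) 2 := (map_ofNat _ 2).symm
  rw [phiNeg, PowerSeries.coeff_mk, map_sub, h2, PowerSeries.coeff_C_mul,
    Eser, PowerSeries.coeff_mk]
  rcases eq_or_ne i 0 with rfl | hi
  · rw [if_pos rfl, if_neg (by rintro ⟨k, hk, hcon⟩; have := pow_pos hk 2; omega)]
    simp
  · rw [if_neg hi, PowerSeries.coeff_one, if_neg hi]
    by_cases hc : ∃ k : ℕ, 0 < k ∧ i = k^2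
    · rw [if_pos hc, if_pos hc, pow_succ]
      ring
    · rw [if_neg hc, if_neg hc]
      ring

noncomputable def xE : PowerSeries (ZMod 32) :=
  PowerSeries.map (Int.castRingHom (ZMod 32)) Eser

noncomputable def Bc : PowerSeries (ZMod 32) := 1 + 2*xE + 4*xE^2 + 8*xE^3 + 16*xE^4

lemma h32 : (32 : PowerSeries (ZMod 32)) = 0 := by
  have h0 : ((32:ℕ) : ZMod 32) = 0 := by decide
  calc (32 : PowerSeries (ZMod 32)) = ((32:ℕ) : PowerSeries (ZMod 32)) := by norm_cast
    _ = PowerSeries.C (R := ZMod 32) ((32:ℕ) : ZMod 32) := (map_natCast _ 32).symm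
    _ = 0 := by rw [h0, map_zero]

lemma phiNeg_map :
    PowerSeries.map (Int.castRingHom (ZMod 32)) phiNeg = 1 - 2*xE := by
  rw [phiNeg_eq, map_sub, map_one, map_mul, xE, map_ofNat]

lemma Bc_inv : (1 - 2*xE) * Bc = 1 := by
  rw [Bc]
  linear_combination (-(xE^5)) * h32

lemma phiInv_map :
    PowerSeries.map (Int.castRingHom (ZMod 32)) phiInv = Bc := by
  have h1 : (1 - 2*xE) * PowerSeries.map (Int.castRingHom (ZMod 32)) phiInv = 1 := by
    rw [← phiNeg_map, ← map_mul, phiNeg_mul_phiInv, map_one]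
  calc PowerSeries.map (Int.castRingHom (ZMod 32)) phiInv
      = PowerSeries.map (Int.castRingHom (ZMod 32)) phiInv * ((1 - 2*xE) * Bc) := by
        rw [Bc_inv, mul_one]
    _ = ((1 - 2*xE) * PowerSeries.map (Int.castRingHom (ZMod 32)) phiInv) * Bc := by ring
    _ = Bc := by rw [h1, one_mul]

lemma pow_form : ∀ t : ℕ, ∃ d0 d1 d2 d3 d4 : ZMod 32,
    Bc ^ t = PowerSeries.C (R := ZMod 32) d0 + 2 * PowerSeries.C (R := ZMod 32) d1 * xE
      + 4 * PowerSeries.C (R := ZMod 32) d2 * xE^2 + 8 * PowerSeries.C (R := ZMod 32) d3 * xE^3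
      + 16 * PowerSeries.C (R := ZMod 32) d4 * xE^4 := by
  intro t
  induction t with
  | zero => exact ⟨1, 0, 0, 0, 0, by simp⟩
  | succ t ih =>
    obtain ⟨d0, d1, d2, d3, d4, ih⟩ := ih
    refine ⟨d0, d0+d1, d0+d1+d2, d0+d1+d2+d3, d0+d1+d2+d3+d4, ?_⟩
    rw [pow_succ, ih, Bc]
    simp only [map_add]
    linear_combination ((PowerSeries.C (R := ZMod 32) d1 + PowerSeries.C (R := ZMod 32) d2
        + PowerSeries.C (R := ZMod 32) d3 + PowerSeries.C (R := ZMod 32) d4)*xE^5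
      + (2*PowerSeries.C (R := ZMod 32) d2 + 2*PowerSeries.C (R := ZMod 32) d3
        + 2*PowerSeries.C (R := ZMod 32) d4)*xE^6
      + (4*PowerSeries.C (R := ZMod 32) d3 + 4*PowerSeries.C (R := ZMod 32) d4)*xE^7
      + (8*PowerSeries.C (R := ZMod 32) d4)*xE^8) * h32

lemma sq7a : ∀ x : ZMod 8, x^2 ≠ 7 := by decide
lemma sq7b : ∀ x y : ZMod 8, x^2 + y^2 ≠ 7 := by decide
lemma sq7c : ∀ x y z : ZMod 8, x^2 + y^2 + z^2 ≠ 7 := by decide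

lemma cast8 (n : ℕ) : ((8*n+7 : ℕ) : ZMod 8) = 7 := by
  push_cast
  rw [show ((8 : ZMod 8)) = 0 by decide]
  ring

lemma E_sq {a : ℕ} (h : PowerSeries.coeff (R := ℤ) a Eser ≠ 0) :
    ∃ x : ZMod 8, (a : ZMod 8) = x^2 := by
  rw [Eser, PowerSeries.coeff_mk] at h
  by_cases hc : ∃ k : ℕ, 0 < k ∧ a = k^2
  · obtain ⟨k, _, rfl⟩ := hc
    exact ⟨(k : ZMod 8), by push_cast; ring⟩
  · rw [if_neg hc] at h
    exact absurd rfl h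

lemma he1 (n : ℕ) : PowerSeries.coeff (R := ℤ) (8*n+7) Eser = 0 := by
  by_contra h
  obtain ⟨x, hx⟩ := E_sq h
  rw [cast8] at hx
  exact sq7a x hx.symm

lemma he2 (n : ℕ) : PowerSeries.coeff (R := ℤ) (8*n+7) (Eser^2) = 0 := by
  rw [pow_two, PowerSeries.coeff_mul]
  apply Finset.sum_eq_zero
  intro p hp
  rw [Finset.HasAntidiagonal.mem_antidiagonal] at hp
  by_cases h1 : PowerSeries.coeff (R := ℤ) p.1 Eser = 0
  · rw [h1, zero_mul]
  by_cases h2 : PowerSeries.coeff (R := ℤ) p.2 Eser = 0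
  · rw [h2, mul_zero]
  exfalso
  obtain ⟨x, hx⟩ := E_sq h1
  obtain ⟨y, hy⟩ := E_sq h2
  apply sq7b x y
  have hcast : ((p.1 + p.2 : ℕ) : ZMod 8) = 7 := by rw [hp, cast8]
  push_cast at hcast
  rw [hx, hy] at hcast
  exact hcast

lemma he3 (n : ℕ) : PowerSeries.coeff (R := ℤ) (8*n+7) (Eser^3) = 0 := by
  rw [show Eser^3 = Eser * Eser^2 by ring, PowerSeries.coeff_mul]
  apply Finset.sum_eq_zero
  intro p hp
  rw [Finset.HasAntidiagonal.mem_antidiagonal] at hp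
  by_cases h1 : PowerSeries.coeff (R := ℤ) p.1 Eser = 0
  · rw [h1, zero_mul]
  suffices h : PowerSeries.coeff (R := ℤ) p.2 (Eser^2) = 0 by rw [h, mul_zero]
  rw [pow_two, PowerSeries.coeff_mul]
  apply Finset.sum_eq_zero
  intro q hq
  rw [Finset.HasAntidiagonal.mem_antidiagonal] at hq
  by_cases h2 : PowerSeries.coeff (R := ℤ) q.1 Eser = 0
  · rw [h2, zero_mul]
  by_cases h3 : PowerSeries.coeff (R := ℤ) q.2 Eser = 0
  · rw [h3, mul_zero]
  exfalso
  obtain ⟨x, hx⟩ := E_sq h1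
  obtain ⟨y, hy⟩ := E_sq h2
  obtain ⟨z, hz⟩ := E_sq h3
  apply sq7c x y z
  have hsum : p.1 + (q.1 + q.2) = 8*n+7 := by omega
  have hcast : ((p.1 + (q.1 + q.2) : ℕ) : ZMod 8) = 7 := by rw [hsum, cast8]
  push_cast at hcast
  rw [hx, hy, hz] at hcast
  linear_combination hcast

lemma he4 (n : ℕ) : ∃ w : ℤ, PowerSeries.coeff (R := ℤ) (8*n+7) (Eser^4) = 2*w := by
  have key : ((PowerSeries.coeff (R := ℤ) (8*n+7) (Eser^4) : ℤ) : ZMod 2) = 0 := by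
    rw [show Eser^4 = Eser^2 * Eser^2 by ring, PowerSeries.coeff_mul]
    push_cast
    apply Finset.sum_involution (fun p _ => (p.2, p.1))
    · intro p hp
      have h2 : ∀ z : ZMod 2, z + z = 0 := by decide
      calc ((PowerSeries.coeff (R := ℤ) p.1 (Eser^2) : ℤ) : ZMod 2)
            * ((PowerSeries.coeff (R := ℤ) p.2 (Eser^2) : ℤ) : ZMod 2)
          + ((PowerSeries.coeff (R := ℤ) (p.2, p.1).1 (Eser^2) : ℤ) : ZMod 2)
            * ((PowerSeries.coeff (R := ℤ) (p.2, p.1).2 (Eser^2) : ℤ) : ZMod 2)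
          = ((PowerSeries.coeff (R := ℤ) p.1 (Eser^2) : ℤ) : ZMod 2)
            * ((PowerSeries.coeff (R := ℤ) p.2 (Eser^2) : ℤ) : ZMod 2)
          + ((PowerSeries.coeff (R := ℤ) p.1 (Eser^2) : ℤ) : ZMod 2)
            * ((PowerSeries.coeff (R := ℤ) p.2 (Eser^2) : ℤ) : ZMod 2) := by ring
        _ = 0 := h2 _
    · intro p hp _
      rw [Finset.HasAntidiagonal.mem_antidiagonal] at hp
      intro hcon
      have : p.2 = p.1 := congrArg Prod.fst hcon
      omega
    · intro p hp
      rw [Finset.HasAntidiagonal.mem_antidiagonal] at hp ⊢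
      omega
    · intro p hp
      rfl
  have hdvd : (2:ℤ) ∣ PowerSeries.coeff (R := ℤ) (8*n+7) (Eser^4) :=
    (ZMod.intCast_zmod_eq_zero_iff_dvd _ 2).mp key
  exact hdvd

lemma coeff_Bt_zero (t n : ℕ) :
    PowerSeries.coeff (R := ZMod 32) (8*n+7) (Bc ^ t) = 0 := by
  obtain ⟨d0, d1, d2, d3, d4, h⟩ := pow_form t
  have hx : ∀ j : ℕ, PowerSeries.coeff (R := ZMod 32) (8*n+7) (xE^j)
      = ((PowerSeries.coeff (R := ℤ) (8*n+7) (Eser^j) : ℤ) : ZMod 32) := by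
    intro j
    rw [xE, ← map_pow, PowerSeries.coeff_map]
    rfl
  have e1 : (2 : PowerSeries (ZMod 32)) * PowerSeries.C (R := ZMod 32) d1 * xE
      = PowerSeries.C (R := ZMod 32) (2*d1) * xE^1 := by
    rw [map_mul, map_ofNat, pow_one]
  have e2 : (4 : PowerSeries (ZMod 32)) * PowerSeries.C (R := ZMod 32) d2 * xE^2
      = PowerSeries.C (R := ZMod 32) (4*d2) * xE^2 := by
    rw [map_mul, map_ofNat]
  have e3 : (8 : PowerSeries (ZMod 32)) * PowerSeries.C (R := ZMod 32) d3 * xE^3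
      = PowerSeries.C (R := ZMod 32) (8*d3) * xE^3 := by
    rw [map_mul, map_ofNat]
  have e4 : (16 : PowerSeries (ZMod 32)) * PowerSeries.C (R := ZMod 32) d4 * xE^4
      = PowerSeries.C (R := ZMod 32) (16*d4) * xE^4 := by
    rw [map_mul, map_ofNat]
  obtain ⟨w, hw⟩ := he4 n
  rw [h, e1, e2, e3, e4, map_add, map_add, map_add, map_add,
    PowerSeries.coeff_C_mul, PowerSeries.coeff_C_mul, PowerSeries.coeff_C_mul,
    PowerSeries.coeff_C_mul, hx 1, hx 2, hx 3, hx 4,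
    pow_one, he1 n, he2 n, he3 n, hw,
    PowerSeries.coeff_C, if_neg (by omega)]
  push_cast
  have h0 : (32 : ZMod 32) = 0 := by decide
  linear_combination (d4 * (w : ZMod 32)) * h0

end GaussAux

/-- For all `n ≥ 0` and all odd `t ≥ 1`, `p̄_{-t}(8n+7) ≡ 0 (mod 32)`. -/
theorem pbar_eight_n_add_7 (t : ℕ) (ht1 : 1 ≤ t) (ht : Odd t) (n : ℕ) :
    (32 : ℤ) ∣ pbar t (8 * n + 7) := by
  have h1 : pbar t (8*n+7) = PowerSeries.coeff (R := ℤ) (8*n+7) (GaussAux.phiInv ^ t) := by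
    rw [pbar, GaussAux.coeff_overGF_eq_phiInv_pow]
  have h2 : ((pbar t (8*n+7) : ℤ) : ZMod 32)
      = PowerSeries.coeff (R := ZMod 32) (8*n+7) (GaussAux.Bc ^ t) := by
    rw [h1, ← GaussAux.phiInv_map, ← map_pow, PowerSeries.coeff_map]
    rfl
  have h3 := GaussAux.coeff_Bt_zero t n
  have hz : ((pbar t (8*n+7) : ℤ) : ZMod 32) = 0 := by rw [h2, h3]
  have hd := (ZMod.intCast_zmod_eq_zero_iff_dvd _ 32).mp hz
  exact_mod_cast hd
end

section
/- The following identity of formal power series over ℤ holds: φ(-q) · ∏_{i≥0} φ(q^{2^i})^{2^i} = 1, i.e., 1/φ(-q) = ∏_{i≥0} φ(q^{2^i})^{2^i}, where the infinite product converges in the formal power series topology. -/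
open scoped Classical

open PowerSeries Finset

noncomputable def sgn (j : ℤ) : ℤ := (Int.negOnePow j : ℤ)

lemma sgn_neg (j : ℤ) : sgn (-j) = sgn j := by simp [sgn]
lemma sgn_zero : sgn 0 = 1 := by simp [sgn]
lemma sgn_natCast (k : ℕ) : sgn (k : ℤ) = (-1 : ℤ) ^ k := Int.coe_negOnePow_natCast k
lemma sgn_sub (a b : ℤ) : sgn (a - b) = sgn a * sgn b := by
  simp [sgn, Int.negOnePow_sub]
lemma sgn_even {j : ℤ} (h : Even j) : sgn j = 1 := by simp [sgn, Int.negOnePow_even _ h]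
lemma sgn_odd {j : ℤ} (h : Odd j) : sgn j = -1 := by simp [sgn, Int.negOnePow_odd _ h]

noncomputable def zbox (n : ℕ) : Finset ℤ := Finset.Icc (-(n : ℤ)) n

lemma mem_box {M n : ℕ} (hM : 1 ≤ M) {j : ℤ} (h : (M : ℤ) * j ^ 2 ≤ n) : j ∈ zbox n := by
  have h1 : |j| ≤ j ^ 2 := by rw [Int.abs_eq_natAbs]; exact Int.natAbs_le_self_sq j
  have hM' : (1 : ℤ) ≤ M := by exact_mod_cast hM
  have h2 : j ^ 2 ≤ (M : ℤ) * j ^ 2 := by nlinarith [sq_nonneg j]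
  unfold zbox
  rw [Finset.mem_Icc]
  constructor <;> linarith [neg_abs_le j, le_abs_self j]

lemma zero_mem_box (n : ℕ) : (0 : ℤ) ∈ zbox n := by
  unfold zbox; rw [Finset.mem_Icc]; constructor <;> simp

/-- generic coefficient sum -/
noncomputable def gsum (F : ℤ → ℤ) (m a N : ℕ) : ℤ :=
  ∑ j ∈ zbox N, if (a : ℤ) = (m : ℤ) * j ^ 2 then F j else 0

lemma gsum_zero (F : ℤ → ℤ) (m N : ℕ) (hm : 1 ≤ m) : gsum F m 0 N = F 0 := by
  unfold gsum
  rw [Finset.sum_eq_single_of_mem 0 (zero_mem_box N)]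
  · simp
  · intro j _ hj
    rw [if_neg]
    intro hc
    have hj2 : j ^ 2 ≠ 0 := pow_ne_zero 2 hj
    have : (0:ℤ) < (m:ℤ) * j ^ 2 := by
      have : (0:ℤ) < j ^ 2 := lt_of_le_of_ne (sq_nonneg j) (Ne.symm hj2)
      have hm' : (0:ℤ) < m := by exact_mod_cast hm
      positivity
    simp at hc
    omega

lemma gsum_rep (F : ℤ → ℤ) {m N a k : ℕ} (hm : 1 ≤ m) (hk : 0 < k) (ha : a = m * k ^ 2)
    (haN : a ≤ N) : gsum F m a N = F k + F (-(k : ℤ)) := by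
  unfold gsum
  have hkN : ((k : ℤ)) ∈ zbox N := by
    apply mem_box hm
    push_cast [ha] at *
    linarith
  have hkN' : (-(k : ℤ)) ∈ zbox N := by
    apply mem_box hm
    have : (-(k:ℤ))^2 = (k:ℤ)^2 := by ring
    rw [this]
    push_cast [ha] at *
    linarith
  have hne : (k : ℤ) ≠ -(k : ℤ) := by omega
  have hsub : ({(k : ℤ), -(k : ℤ)} : Finset ℤ) ⊆ zbox N := by
    intro x hx
    simp only [Finset.mem_insert, Finset.mem_singleton] at hx
    rcases hx with rfl | rfl <;> assumption
  rw [← Finset.sum_subset hsub]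
  · rw [Finset.sum_pair hne, if_pos, if_pos]
    · push_cast [ha]; ring
    · push_cast [ha]; ring
  · intro j hj hjne
    simp only [Finset.mem_insert, Finset.mem_singleton, not_or] at hjne
    rw [if_neg]
    intro hc
    have h2 : j ^ 2 = (k : ℤ) ^ 2 := by
      have hm' : (m : ℤ) ≠ 0 := by exact_mod_cast Nat.one_le_iff_ne_zero.mp hm
      have : (m:ℤ) * j ^ 2 = (m:ℤ) * (k:ℤ) ^ 2 := by push_cast [ha] at hc ⊢; linarith
      exact mul_left_cancel₀ hm' this
    rw [sq_eq_sq_iff_abs_eq_abs] at h2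
    rcases abs_eq_abs.mp h2 with h | h
    · exact hjne.1 h
    · exact hjne.2 h

lemma gsum_nonrep (F : ℤ → ℤ) {m a : ℕ} (N : ℕ) (hm : 1 ≤ m) (ha0 : a ≠ 0)
    (h : ¬∃ k : ℕ, 0 < k ∧ a = m * k ^ 2) : gsum F m a N = 0 := by
  unfold gsum
  apply Finset.sum_eq_zero
  intro j _
  rw [if_neg]
  intro hc
  apply h
  refine ⟨j.natAbs, ?_, ?_⟩
  · rcases Nat.eq_zero_or_pos j.natAbs with h0 | h0
    · exfalso; apply ha0
      have : j = 0 := Int.natAbs_eq_zero.mp h0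
      rw [this] at hc; simpa using hc
    · exact h0
  · zify
    rw [sq_abs]
    exact hc

lemma gsum_stable (F : ℤ → ℤ) {m a N : ℕ} (hm : 1 ≤ m) (haN : a ≤ N) :
    gsum F m a N = gsum F m a a := by
  rcases Nat.eq_zero_or_pos a with rfl | ha
  · rw [gsum_zero F m N hm, gsum_zero F m 0 hm]
  · by_cases h : ∃ k : ℕ, 0 < k ∧ a = m * k ^ 2
    · obtain ⟨k, hk, hak⟩ := h
      rw [gsum_rep F hm hk hak haN, gsum_rep F hm hk hak le_rfl]
    · rw [gsum_nonrep F N hm (Nat.pos_iff_ne_zero.mp ha) h,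
        gsum_nonrep F a hm (Nat.pos_iff_ne_zero.mp ha) h]

noncomputable def PQ (F : ℤ → ℤ) (m N : ℕ) : PowerSeries ℤ :=
  ∑ j ∈ zbox N, PowerSeries.C (F j) * PowerSeries.X ^ (m * j.natAbs ^ 2)

lemma coeff_PQ (F : ℤ → ℤ) (m N a : ℕ) : PowerSeries.coeff (R := ℤ) a (PQ F m N) = gsum F m a N := by
  unfold PQ gsum
  rw [map_sum]
  apply Finset.sum_congr rfl
  intro j _
  rw [PowerSeries.coeff_C_mul, PowerSeries.coeff_X_pow]
  by_cases h : (a : ℤ) = (m : ℤ) * j ^ 2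
  · rw [if_pos h, if_pos, mul_one]
    zify
    rw [sq_abs]
    exact h
  · rw [if_neg h, if_neg, mul_zero]
    intro hn
    apply h
    zify at hn
    rwa [sq_abs] at hn

noncomputable def phiNegAt (m : ℕ) : PowerSeries ℤ :=
  PowerSeries.mk fun n => gsum sgn m n n

lemma coeff_phiNegAt (m a : ℕ) : PowerSeries.coeff (R := ℤ) a (phiNegAt m) = gsum sgn m a a :=
  PowerSeries.coeff_mk a _

lemma coeff_phi (a : ℕ) {m : ℕ} (hm : 1 ≤ m) :
    PowerSeries.coeff (R := ℤ) a (phi m) = gsum (fun _ => 1) m a a := by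
  rw [phi, PowerSeries.coeff_mk]
  rcases Nat.eq_zero_or_pos a with rfl | ha
  · rw [gsum_zero _ _ _ hm, if_pos rfl]
  · have ha0 : a ≠ 0 := Nat.pos_iff_ne_zero.mp ha
    rw [if_neg ha0]
    by_cases h : ∃ k : ℕ, 0 < k ∧ a = m * k ^ 2
    · obtain ⟨k, hk, hak⟩ := h
      rw [gsum_rep _ hm hk hak le_rfl, if_pos ⟨k, hk, hak⟩]
      norm_num
    · rw [gsum_nonrep _ _ hm ha0 h, if_neg h]

lemma phiNeg_eq : phiNeg = phiNegAt 1 := by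
  ext n
  rw [phiNeg, PowerSeries.coeff_mk, coeff_phiNegAt]
  rcases Nat.eq_zero_or_pos n with rfl | hn
  · rw [gsum_zero _ _ _ le_rfl, if_pos rfl, sgn_zero]
  · have hn0 : n ≠ 0 := Nat.pos_iff_ne_zero.mp hn
    rw [if_neg hn0]
    by_cases h : ∃ k : ℕ, 0 < k ∧ n = k ^ 2
    · obtain ⟨k, hk, hnk⟩ := h
      have hnk' : n = 1 * k ^ 2 := by omega
      rw [gsum_rep _ le_rfl hk hnk' le_rfl, if_pos ⟨k, hk, hnk⟩, sgn_neg, sgn_natCast]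
      have : (-1 : ℤ) ^ n = (-1 : ℤ) ^ k := by
        rcases Nat.even_or_odd k with he | ho
        · have hen : Even n := hnk ▸ (Nat.even_pow.mpr ⟨he, two_ne_zero⟩)
          rw [he.neg_one_pow, hen.neg_one_pow]
        · rw [ho.neg_one_pow, (hnk ▸ (ho.pow : Odd (k ^ 2)) : Odd n).neg_one_pow]
      rw [this]
      ring
    · have h' : ¬∃ k : ℕ, 0 < k ∧ n = 1 * k ^ 2 := by
        simpa using h
      rw [gsum_nonrep _ _ le_rfl hn0 h', if_neg h]

lemma coeff_PQ_mul_PQ (F G : ℤ → ℤ) (m₁ m₂ N n : ℕ) :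
    PowerSeries.coeff (R := ℤ) n (PQ F m₁ N * PQ G m₂ N) =
      ∑ p ∈ zbox N ×ˢ zbox N,
        if (n : ℤ) = (m₁ : ℤ) * p.1 ^ 2 + (m₂ : ℤ) * p.2 ^ 2 then F p.1 * G p.2 else 0 := by
  unfold PQ
  rw [Finset.sum_mul_sum, Finset.sum_product]
  rw [map_sum]
  apply Finset.sum_congr rfl
  intro j _
  rw [map_sum]
  apply Finset.sum_congr rfl
  intro k _
  have hre : (PowerSeries.C (F j) * PowerSeries.X ^ (m₁ * j.natAbs ^ 2)) *
      (PowerSeries.C (G k) * PowerSeries.X ^ (m₂ * k.natAbs ^ 2)) =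
      PowerSeries.C (F j * G k) * PowerSeries.X ^ (m₁ * j.natAbs ^ 2 + m₂ * k.natAbs ^ 2) := by
    rw [mul_mul_mul_comm, ← pow_add, ← map_mul]
  rw [hre, PowerSeries.coeff_C_mul, PowerSeries.coeff_X_pow]
  by_cases h : (n : ℤ) = (m₁ : ℤ) * j ^ 2 + (m₂ : ℤ) * k ^ 2
  · rw [if_pos h, if_pos, mul_one]
    zify
    rw [sq_abs, sq_abs]
    exact h
  · rw [if_neg h, if_neg, mul_zero]
    intro hn
    apply h
    zify at hn
    rwa [sq_abs, sq_abs] at hn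

lemma comb (m n : ℕ) (hm : 1 ≤ m) :
    (∑ p ∈ zbox n ×ˢ zbox n,
        if (n : ℤ) = (m : ℤ) * p.1 ^ 2 + (m : ℤ) * p.2 ^ 2 then sgn p.2 else 0)
    = ∑ p ∈ zbox n ×ˢ zbox n,
        if (n : ℤ) = ((2 * m : ℕ) : ℤ) * p.1 ^ 2 + ((2 * m : ℕ) : ℤ) * p.2 ^ 2
        then sgn p.1 * sgn p.2 else 0 := by
  rw [← Finset.sum_filter, ← Finset.sum_filter]
  set S := (zbox n ×ˢ zbox n).filter
      (fun p : ℤ × ℤ => (n : ℤ) = (m : ℤ) * p.1 ^ 2 + (m : ℤ) * p.2 ^ 2) with hS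
  set T := (zbox n ×ˢ zbox n).filter
      (fun p : ℤ × ℤ => (n : ℤ) = ((2 * m : ℕ) : ℤ) * p.1 ^ 2 + ((2 * m : ℕ) : ℤ) * p.2 ^ 2)
      with hT
  rw [← Finset.sum_filter_add_sum_filter_not S (fun p : ℤ × ℤ => Even (p.1 + p.2))]
  have hodd : (∑ p ∈ S.filter (fun p : ℤ × ℤ => ¬ Even (p.1 + p.2)), sgn p.2) = 0 := by
    apply Finset.sum_involution (g := fun p _ => (p.2, p.1))
    · intro p hp
      simp only [Finset.mem_filter, hS] at hp
      have hoddsum : ¬ Even (p.1 + p.2) := hp.2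
      by_cases h1 : Even p.1
      · have h2 : Odd p.2 := Int.not_even_iff_odd.mp
          (fun h => hoddsum (Int.even_add.mpr (iff_of_true h1 h)))
        simp [sgn_even h1, sgn_odd h2]
      · have h1' : Odd p.1 := Int.not_even_iff_odd.mp h1
        have h2 : Even p.2 := by
          rcases Int.even_or_odd p.2 with h | h
          · exact h
          · exact absurd (h1'.add_odd h) hoddsum
        simp [sgn_odd h1', sgn_even h2]
    · intro p hp hne
      intro hcon
      have : p.1 = p.2 := (Prod.ext_iff.mp hcon).2.symm ▸ (Prod.ext_iff.mp hcon).1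
      simp only [Finset.mem_filter] at hp
      exact hp.2 (by rw [← this]; exact ⟨p.1, by ring⟩)
    · intro p hp
      simp only [Finset.mem_filter, Finset.mem_product, hS] at hp ⊢
      refine ⟨⟨⟨hp.1.1.2, hp.1.1.1⟩, by linarith [hp.1.2]⟩, ?_⟩
      rw [add_comm]
      exact hp.2
    · intro p hp
      rfl
  rw [hodd, add_zero]
  apply Finset.sum_nbij' (i := fun p : ℤ × ℤ => ((p.1 + p.2) / 2, (p.1 - p.2) / 2))
    (j := fun q : ℤ × ℤ => (q.1 + q.2, q.1 - q.2))
  · -- hi : maps into T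
    intro p hp
    simp only [Finset.mem_filter, Finset.mem_product, hS, hT] at hp ⊢
    obtain ⟨⟨_, hc⟩, he⟩ := hp
    have h2u : 2 * ((p.1 + p.2) / 2) = p.1 + p.2 := Int.two_mul_ediv_two_of_even he
    have hev : Even (p.1 - p.2) := (Int.even_sub).mpr (Int.even_add.mp he)
    have h2v : 2 * ((p.1 - p.2) / 2) = p.1 - p.2 := Int.two_mul_ediv_two_of_even hev
    set u := (p.1 + p.2) / 2 with hu
    set v := (p.1 - p.2) / 2 with hv
    have e1 : (2 * u) ^ 2 = (p.1 + p.2) ^ 2 := by rw [h2u]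
    have e2 : (2 * v) ^ 2 = (p.1 - p.2) ^ 2 := by rw [h2v]
    have e3 : 2 * (u ^ 2 + v ^ 2) = p.1 ^ 2 + p.2 ^ 2 := by nlinarith [e1, e2]
    have hcond : (n : ℤ) = ((2 * m : ℕ) : ℤ) * u ^ 2 + ((2 * m : ℕ) : ℤ) * v ^ 2 := by
      push_cast
      push_cast at hc
      linear_combination hc - (m : ℤ) * e3
    refine ⟨⟨?_, ?_⟩, hcond⟩
    · apply mem_box (M := 2 * m) (by omega)
      have : (0 : ℤ) ≤ ((2 * m : ℕ) : ℤ) * v ^ 2 := by positivity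
      linarith [hcond]
    · apply mem_box (M := 2 * m) (by omega)
      have : (0 : ℤ) ≤ ((2 * m : ℕ) : ℤ) * u ^ 2 := by positivity
      linarith [hcond]
  · -- hj : maps back into S-even
    intro q hq
    simp only [Finset.mem_filter, Finset.mem_product, hS, hT] at hq ⊢
    have hc := hq.2
    have hc' : (n : ℤ) = 2 * (m : ℤ) * q.1 ^ 2 + 2 * (m : ℤ) * q.2 ^ 2 := by
      push_cast at hc; linarith [hc]
    have hm' : (1 : ℤ) ≤ (m : ℤ) := by exact_mod_cast hm
    refine ⟨⟨⟨?_, ?_⟩, ?_⟩, ⟨q.1, by ring⟩⟩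
    · apply mem_box (M := m) hm
      nlinarith [sq_nonneg (q.1 - q.2), sq_nonneg (q.1 + q.2)]
    · apply mem_box (M := m) hm
      nlinarith [sq_nonneg (q.1 - q.2), sq_nonneg (q.1 + q.2)]
    · linear_combination hc'
  · -- left_inv
    intro p hp
    simp only [Finset.mem_filter, hS] at hp
    have he := hp.2
    have h2u : 2 * ((p.1 + p.2) / 2) = p.1 + p.2 := Int.two_mul_ediv_two_of_even he
    have hev : Even (p.1 - p.2) := (Int.even_sub).mpr (Int.even_add.mp he)
    have h2v : 2 * ((p.1 - p.2) / 2) = p.1 - p.2 := Int.two_mul_ediv_two_of_even hev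
    rw [Prod.ext_iff]
    constructor <;> (simp only []; omega)
  · -- right_inv
    intro q hq
    rw [Prod.ext_iff]
    constructor <;> (simp only []; omega)
  · -- values
    intro p hp
    simp only [Finset.mem_filter, hS] at hp
    have he := hp.2
    have h2u : 2 * ((p.1 + p.2) / 2) = p.1 + p.2 := Int.two_mul_ediv_two_of_even he
    have hev : Even (p.1 - p.2) := (Int.even_sub).mpr (Int.even_add.mp he)
    have h2v : 2 * ((p.1 - p.2) / 2) = p.1 - p.2 := Int.two_mul_ediv_two_of_even hev
    rw [← sgn_sub]
    congr 1
    omega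

lemma key {m : ℕ} (hm : 1 ≤ m) : phi m * phiNegAt m = phiNegAt (2 * m) ^ 2 := by
  ext n
  rw [pow_two]
  have e1 : PowerSeries.coeff (R := ℤ) n (phi m * phiNegAt m)
      = PowerSeries.coeff (R := ℤ) n (PQ (fun _ => 1) m n * PQ sgn m n) := by
    rw [PowerSeries.coeff_mul, PowerSeries.coeff_mul]
    apply Finset.sum_congr rfl
    intro p hp
    rw [Finset.HasAntidiagonal.mem_antidiagonal] at hp
    rw [coeff_phi _ hm, coeff_phiNegAt, coeff_PQ, coeff_PQ,
      gsum_stable _ hm (show p.1 ≤ n by omega), gsum_stable _ hm (show p.2 ≤ n by omega)]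
  have e2 : PowerSeries.coeff (R := ℤ) n (phiNegAt (2 * m) * phiNegAt (2 * m))
      = PowerSeries.coeff (R := ℤ) n (PQ sgn (2 * m) n * PQ sgn (2 * m) n) := by
    rw [PowerSeries.coeff_mul, PowerSeries.coeff_mul]
    apply Finset.sum_congr rfl
    intro p hp
    rw [Finset.HasAntidiagonal.mem_antidiagonal] at hp
    have hm2 : 1 ≤ 2 * m := by omega
    rw [coeff_phiNegAt, coeff_phiNegAt, coeff_PQ, coeff_PQ,
      gsum_stable _ hm2 (show p.1 ≤ n by omega), gsum_stable _ hm2 (show p.2 ≤ n by omega)]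
  rw [e1, e2, coeff_PQ_mul_PQ, coeff_PQ_mul_PQ]
  have := comb m n hm
  simpa [one_mul] using this

def Dlow (b : ℕ) (f : PowerSeries ℤ) : Prop :=
  ∀ c ≤ b, PowerSeries.coeff (R := ℤ) c f = if c = 0 then 1 else 0

lemma Dlow_one (b : ℕ) : Dlow b 1 := fun c _ => PowerSeries.coeff_one c

lemma Dlow_mul {b : ℕ} {f g : PowerSeries ℤ} (hf : Dlow b f) (hg : Dlow b g) :
    Dlow b (f * g) := by
  intro c hc
  rw [PowerSeries.coeff_mul]
  rcases Nat.eq_zero_or_pos c with rfl | hcpos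
  · rw [if_pos rfl]
    rw [Finset.Nat.antidiagonal_zero, Finset.sum_singleton]
    rw [hf 0 (Nat.zero_le b), hg 0 (Nat.zero_le b)]
    norm_num
  · rw [if_neg (Nat.pos_iff_ne_zero.mp hcpos)]
    apply Finset.sum_eq_zero
    intro p hp
    rw [Finset.HasAntidiagonal.mem_antidiagonal] at hp
    rw [hf p.1 (by omega), hg p.2 (by omega)]
    by_cases e1 : p.1 = 0
    · rw [if_pos e1, if_neg (by omega), mul_zero]
    · rw [if_neg e1, zero_mul]

lemma Dlow_pow {b : ℕ} {f : PowerSeries ℤ} (hf : Dlow b f) (t : ℕ) : Dlow b (f ^ t) := by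
  induction t with
  | zero => simpa using Dlow_one b
  | succ t ih => rw [pow_succ]; exact Dlow_mul ih hf

lemma Dlow_phi {b m : ℕ} (hb : b < m) : Dlow b (phi m) := by
  intro c hc
  rw [phi, PowerSeries.coeff_mk]
  rcases Nat.eq_zero_or_pos c with rfl | hcpos
  · rw [if_pos rfl, if_pos rfl]
  · have hc0 : c ≠ 0 := Nat.pos_iff_ne_zero.mp hcpos
    rw [if_neg hc0, if_neg hc0, if_neg]
    rintro ⟨k, hk, hck⟩
    have h1 : 1 ≤ k ^ 2 := Nat.one_le_pow 2 k hk
    have h2 : m ≤ m * k ^ 2 := Nat.le_mul_of_pos_right m (by omega)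
    omega

lemma Dlow_phiNegAt {b m : ℕ} (hb : b < m) : Dlow b (phiNegAt m) := by
  intro c hc
  have hm : 1 ≤ m := by omega
  rw [coeff_phiNegAt]
  rcases Nat.eq_zero_or_pos c with rfl | hcpos
  · rw [if_pos rfl, gsum_zero _ _ _ hm, sgn_zero]
  · have hc0 : c ≠ 0 := Nat.pos_iff_ne_zero.mp hcpos
    rw [if_neg hc0, gsum_nonrep _ _ hm hc0]
    rintro ⟨k, hk, hck⟩
    have h1 : 1 ≤ k ^ 2 := Nat.one_le_pow 2 k hk
    have h2 : m ≤ m * k ^ 2 := Nat.le_mul_of_pos_right m (by omega)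
    omega

lemma coeff_mul_Dlow {b : ℕ} {F G : PowerSeries ℤ} (hG : Dlow b G) :
    PowerSeries.coeff (R := ℤ) b (F * G) = PowerSeries.coeff (R := ℤ) b F := by
  rw [PowerSeries.coeff_mul]
  rw [Finset.sum_eq_single (b, 0)]
  · rw [hG 0 (Nat.zero_le b), if_pos rfl, mul_one]
  · intro p hp hne
    rw [Finset.HasAntidiagonal.mem_antidiagonal] at hp
    rw [hG p.2 (by omega)]
    by_cases h0 : p.2 = 0
    · exfalso
      apply hne
      rw [Prod.ext_iff]
      exact ⟨by omega, h0⟩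
    · rw [if_neg h0, mul_zero]
  · intro h
    exact absurd (Finset.HasAntidiagonal.mem_antidiagonal.mpr (by simp)) h

lemma tel (N : ℕ) :
    phiNegAt 1 * ∏ k ∈ Finset.range N, phi (2 ^ k) ^ 2 ^ k = phiNegAt (2 ^ N) ^ 2 ^ N := by
  induction N with
  | zero => simp
  | succ N ih =>
    have h2 : 2 * 2 ^ N = 2 ^ (N + 1) := by rw [pow_succ, Nat.mul_comm]
    rw [Finset.prod_range_succ, ← mul_assoc, ih, ← mul_pow,
      mul_comm (phiNegAt (2 ^ N)) (phi (2 ^ N)), key (Nat.one_le_two_pow), ← pow_mul, h2]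

/-- `φ(-q) · ∏_{i ≥ 0} φ(q^{2^i})^{2^i} = 1`, i.e. `1/φ(-q) = ∏_{i ≥ 0} φ(q^{2^i})^{2^i}`. -/
theorem phiNeg_inv :
    phiNeg * (seriesProd fun i => phi (2 ^ i) ^ 2 ^ i) = 1 := by
  ext n
  rw [phiNeg_eq]
  have hQ : PowerSeries.coeff (R := ℤ) n (phiNegAt 1 * seriesProd fun i => phi (2 ^ i) ^ 2 ^ i)
      = PowerSeries.coeff (R := ℤ) n
          (phiNegAt 1 * ∏ k ∈ Finset.range (n + 1), phi (2 ^ k) ^ 2 ^ k) := by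
    rw [PowerSeries.coeff_mul, PowerSeries.coeff_mul]
    apply Finset.sum_congr rfl
    intro p hp
    rw [Finset.HasAntidiagonal.mem_antidiagonal] at hp
    congr 1
    rw [seriesProd, PowerSeries.coeff_mk]
    have hsplit : (∏ k ∈ Finset.range (n + 1), phi (2 ^ k) ^ 2 ^ k)
        = (∏ k ∈ Finset.range (p.2 + 1), phi (2 ^ k) ^ 2 ^ k) *
          ∏ k ∈ Finset.Ico (p.2 + 1) (n + 1), phi (2 ^ k) ^ 2 ^ k := by
      rw [Finset.range_eq_Ico,
        ← Finset.prod_Ico_consecutive _ (by omega : 0 ≤ p.2 + 1) (by omega : p.2 + 1 ≤ n + 1), Finset.range_eq_Ico]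
    rw [hsplit]
    symm
    apply coeff_mul_Dlow
    apply Finset.prod_induction _ (Dlow p.2) (fun _ _ => Dlow_mul) (Dlow_one p.2)
    intro k hk
    rw [Finset.mem_Ico] at hk
    apply Dlow_pow
    apply Dlow_phi
    calc p.2 < p.2 + 1 := Nat.lt_succ_self _
    _ ≤ k := hk.1
    _ < 2 ^ k := Nat.lt_two_pow_self (n := k)
  rw [hQ, tel (n + 1)]
  have hD : Dlow n (phiNegAt (2 ^ (n + 1)) ^ 2 ^ (n + 1)) := by
    apply Dlow_pow
    apply Dlow_phiNegAt
    calc n < 2 ^ n := Nat.lt_two_pow_self (n := n)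
    _ ≤ 2 ^ (n + 1) := Nat.pow_le_pow_right (by omega) (by omega)
  rw [hD n le_rfl, PowerSeries.coeff_one]
end

section
/- For all integers n ≥ 0, the coefficient of q^n in the formal power series φ(q)·φ(q²)²·φ(q⁴)⁴ over ℤ is divisible by 2 if n ≡ 1 (mod 8), by 4 if n ≡ 2 (mod 8), by 8 if n ≡ 3 (mod 8), by 2 if n ≡ 4 (mod 8), by 8 if n ≡ 5 (mod 8), by 8 if n ≡ 6 (mod 8), and by 32 if n ≡ 7 (mod 8). -/
open scoped Classical

namespace Aux
open PowerSeries

def SD (r v : ℕ) (f : PowerSeries ℤ) : Prop :=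
  (∀ n : ℕ, n % 8 ≠ r % 8 → coeff (R := ℤ) n f = 0) ∧ ∀ n : ℕ, (2:ℤ)^v ∣ coeff (R := ℤ) n f

theorem SD.mul {r v s w : ℕ} {f g : PowerSeries ℤ} (hf : SD r v f) (hg : SD s w g) :
    SD (r+s) (v+w) (f*g) := by
  constructor
  · intro n hn
    rw [coeff_mul]
    apply Finset.sum_eq_zero
    rintro ⟨i,j⟩ hij
    rw [Finset.HasAntidiagonal.mem_antidiagonal] at hij
    by_cases hi : i % 8 = r % 8
    · have hj : j % 8 ≠ s % 8 := by omega
      rw [hg.1 j hj, mul_zero]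
    · rw [hf.1 i hi, zero_mul]
  · intro n
    rw [coeff_mul]
    apply Finset.dvd_sum
    rintro ⟨i,j⟩ _
    rw [pow_add]
    exact mul_dvd_mul (hf.2 i) (hg.2 j)

theorem SD.two_mul {r v : ℕ} {f : PowerSeries ℤ} (h : SD r v f) : SD r (v+1) (2 * f) := by
  have h2 : ∀ n, coeff (R := ℤ) n (2 * f) = 2 * coeff (R := ℤ) n f := by
    intro n; rw [_root_.two_mul, map_add, _root_.two_mul]
  constructor
  · intro n hn; rw [h2, h.1 n hn, mul_zero]
  · intro n; rw [h2, pow_succ, mul_comm ((2:ℤ)^v) 2]; exact mul_dvd_mul_left 2 (h.2 n)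

theorem SD.mono {r v v' : ℕ} {f : PowerSeries ℤ} (h : SD r v f) (hv : v' ≤ v) : SD r v' f :=
  ⟨h.1, fun n => dvd_trans (pow_dvd_pow 2 hv) (h.2 n)⟩

theorem SD.cast {r v : ℕ} {f : PowerSeries ℤ} (h : SD r v f) {r' : ℕ} (hr : r % 8 = r' % 8) :
    SD r' v f := ⟨fun n hn => h.1 n (by omega), h.2⟩

theorem SD.add {r v : ℕ} {f g : PowerSeries ℤ} (hf : SD r v f) (hg : SD r v g) :
    SD r v (f+g) :=
  ⟨fun n hn => by rw [map_add, hf.1 n hn, hg.1 n hn, add_zero],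
   fun n => by rw [map_add]; exact dvd_add (hf.2 n) (hg.2 n)⟩

theorem SD_psi_mul_X_pow (M r : ℕ) (hM : ∀ j k : ℕ, 2*j = M*(k*(k+1)) → 8 ∣ j) :
    SD r 0 (psi M * X ^ r) := by
  constructor
  · intro n hn
    rw [PowerSeries.coeff_mul_X_pow']
    split_ifs with h
    · simp only [psi, coeff_mk]
      rw [if_neg]
      rintro ⟨k, hk⟩
      have := hM (n - r) k hk
      omega
    · rfl
  · intro n; simp

theorem SD_phi {m : ℕ} (hm : 8 ∣ m) : SD 0 0 (phi m) := by
  constructor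
  · intro n hn
    simp only [phi, coeff_mk]
    have h0 : n ≠ 0 := by omega
    rw [if_neg h0, if_neg]
    rintro ⟨k, hk, rfl⟩
    have hd : 8 ∣ m * k^2 := hm.mul_right _
    omega
  · intro n; simp

theorem phi_split (m : ℕ) (hm : 0 < m) :
    phi m = phi (4*m) + 2*(psi (8*m) * X^m) := by
  ext n
  have h2 : (coeff (R := ℤ) n) (2*(psi (8*m) * X^m)) = 2 * (coeff (R := ℤ) n) (psi (8*m) * X^m) := by
    rw [two_mul, map_add, two_mul]
  rw [map_add, h2, PowerSeries.coeff_mul_X_pow']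
  simp only [phi, psi, PowerSeries.coeff_mk]
  by_cases hn0 : n = 0
  · subst hn0
    rw [if_pos rfl, if_pos rfl, if_neg (by omega : ¬ m ≤ 0)]
    norm_num
  rw [if_neg hn0, if_neg hn0]
  by_cases hR : ∃ k, 0 < k ∧ n = 4*m*k^2
  · obtain ⟨k, hk, hn⟩ := hR
    rw [if_pos (⟨k, hk, hn⟩ : ∃ k, 0 < k ∧ n = 4*m*k^2)]
    rw [if_pos (⟨2*k, by omega, by rw [hn]; ring⟩ : ∃ k, 0 < k ∧ n = m*k^2)]
    by_cases hmn : m ≤ n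
    · rw [if_pos hmn, if_neg, mul_zero, add_zero]
      rintro ⟨K, hK⟩
      have e1 : 8*m*(K*(K+1)) = 8*(m*(K*(K+1))) := by ring
      have e4 : 4*m*k^2 = 4*(m*k^2) := by ring
      have e3 : m*((2*k)^2) = 4*(m*k^2) := by ring
      have e2 : m*((2*K+1)^2) = 4*(m*(K*(K+1))) + m := by ring
      have e5 : m*((2*k)^2) = m*((2*K+1)^2) := by omega
      have e6 := Nat.eq_of_mul_eq_mul_left hm e5
      have e7 : (2*k)^2 = 4*k^2 := by ring
      have e8 : (2*K+1)^2 = 4*(K*(K+1)) + 1 := by ring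
      omega
    · rw [if_neg hmn]; norm_num
  · rw [if_neg hR]
    by_cases hImn : m ≤ n
    · rw [if_pos hImn]
      by_cases hI : ∃ K : ℕ, 2*(n - m) = 8*m*(K*(K+1))
      · obtain ⟨K, hK⟩ := hI
        rw [if_pos (⟨K, hK⟩ : ∃ K : ℕ, 2*(n - m) = 8*m*(K*(K+1)))]
        have hn' : n = m*(2*K+1)^2 := by
          have e1 : 8*m*(K*(K+1)) = 8*(m*(K*(K+1))) := by ring
          have e2 : m*(2*K+1)^2 = 4*(m*(K*(K+1))) + m := by ring
          omega
        rw [if_pos (⟨2*K+1, by omega, hn'⟩ : ∃ k, 0 < k ∧ n = m*k^2)]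
        norm_num
      · rw [if_neg hI, if_neg]
        · norm_num
        rintro ⟨k, hk, hn⟩
        rcases Nat.even_or_odd k with ⟨j,hj⟩|⟨j,hj⟩
        · exact hR ⟨j, by omega, by rw [hn, hj]; ring⟩
        · apply hI
          refine ⟨j, ?_⟩
          have e1 : m*k^2 = 4*(m*(j*(j+1))) + m := by rw [hj]; ring
          have e2 : 8*m*(j*(j+1)) = 8*(m*(j*(j+1))) := by ring
          omega
    · rw [if_neg hImn, if_neg]
      · norm_num
      rintro ⟨k, hk, hn⟩
      rcases Nat.even_or_odd k with ⟨j,hj⟩|⟨j,hj⟩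
      · exact hR ⟨j, by omega, by rw [hn, hj]; ring⟩
      · apply hImn
        have e1 : m*k^2 = 4*(m*(j*(j+1))) + m := by rw [hj]; ring
        omega

def Tgt (f : PowerSeries ℤ) : Prop := ∀ n : ℕ,
    (n % 8 = 1 → (2 : ℤ) ∣ PowerSeries.coeff (R := ℤ) n f) ∧
    (n % 8 = 2 → (4 : ℤ) ∣ PowerSeries.coeff (R := ℤ) n f) ∧
    (n % 8 = 3 → (8 : ℤ) ∣ PowerSeries.coeff (R := ℤ) n f) ∧
    (n % 8 = 4 → (2 : ℤ) ∣ PowerSeries.coeff (R := ℤ) n f) ∧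
    (n % 8 = 5 → (8 : ℤ) ∣ PowerSeries.coeff (R := ℤ) n f) ∧
    (n % 8 = 6 → (8 : ℤ) ∣ PowerSeries.coeff (R := ℤ) n f) ∧
    (n % 8 = 7 → (32 : ℤ) ∣ PowerSeries.coeff (R := ℤ) n f)

theorem Tgt_add {f g : PowerSeries ℤ} (hf : Tgt f) (hg : Tgt g) : Tgt (f + g) := by
  intro n
  obtain h1 := hf n
  obtain h2 := hg n
  refine ⟨fun h => ?_, fun h => ?_, fun h => ?_, fun h => ?_, fun h => ?_, fun h => ?_,
    fun h => ?_⟩ <;> rw [map_add]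
  · exact dvd_add (h1.1 h) (h2.1 h)
  · exact dvd_add (h1.2.1 h) (h2.2.1 h)
  · exact dvd_add (h1.2.2.1 h) (h2.2.2.1 h)
  · exact dvd_add (h1.2.2.2.1 h) (h2.2.2.2.1 h)
  · exact dvd_add (h1.2.2.2.2.1 h) (h2.2.2.2.2.1 h)
  · exact dvd_add (h1.2.2.2.2.2.1 h) (h2.2.2.2.2.2.1 h)
  · exact dvd_add (h1.2.2.2.2.2.2 h) (h2.2.2.2.2.2.2 h)

theorem Tgt_of_SD {r v : ℕ} {f : PowerSeries ℤ} (h : SD r v f)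
    (c1 : r % 8 = 1 → 1 ≤ v) (c2 : r % 8 = 2 → 2 ≤ v) (c3 : r % 8 = 3 → 3 ≤ v)
    (c4 : r % 8 = 4 → 1 ≤ v) (c5 : r % 8 = 5 → 3 ≤ v) (c6 : r % 8 = 6 → 3 ≤ v)
    (c7 : r % 8 = 7 → 5 ≤ v) : Tgt f := by
  have key : ∀ (n e : ℕ), (n % 8 = r % 8 → e ≤ v) → (2:ℤ)^e ∣ coeff (R := ℤ) n f := by
    intro n e he
    by_cases hn : n % 8 = r % 8
    · exact dvd_trans (pow_dvd_pow 2 (he hn)) (h.2 n)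
    · rw [h.1 n hn]; exact dvd_zero _
  intro n
  refine ⟨fun h1 => ?_, fun h2 => ?_, fun h3 => ?_, fun h4 => ?_, fun h5 => ?_,
    fun h6 => ?_, fun h7 => ?_⟩
  · have := key n 1 (fun hn => c1 (by omega)); simpa using this
  · have := key n 2 (fun hn => c2 (by omega)); norm_num at this; exact this
  · have := key n 3 (fun hn => c3 (by omega)); norm_num at this; exact this
  · have := key n 1 (fun hn => c4 (by omega)); simpa using this
  · have := key n 3 (fun hn => c5 (by omega)); norm_num at this; exact this
  · have := key n 3 (fun hn => c6 (by omega)); norm_num at this; exact this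
  · have := key n 5 (fun hn => c7 (by omega)); norm_num at this; exact this

theorem main : Tgt (phi 1 * phi 2 ^ 2 * phi 4 ^ 4) := by
  have e1 : phi 1 = phi 4 + 2*(psi 8 * X) := by
    have := phi_split 1 (by norm_num); norm_num at this; exact this
  have e2 : phi 2 = phi 8 + 2*(psi 16 * X^2) := by
    have := phi_split 2 (by norm_num); norm_num at this; exact this
  have e4 : phi 4 = phi 16 + 2*(psi 32 * X^4) := by
    have := phi_split 4 (by norm_num); norm_num at this; exact this
  set a := 2*((psi 8 : PowerSeries ℤ) * X) with ha'
  set b := 2*((psi 16 : PowerSeries ℤ) * X^2) with hb'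
  set c := 2*((psi 32 : PowerSeries ℤ) * X^4) with hc'
  set B := phi 8 with hB'
  set C := phi 16 with hC'
  have hB : SD 0 0 B := SD_phi (by norm_num)
  have hC : SD 0 0 C := SD_phi (by norm_num)
  have ha : SD 1 1 a := by
    have h0 : SD 1 0 ((psi 8 : PowerSeries ℤ) * X) := by
      have := SD_psi_mul_X_pow 8 1 ?_
      · rwa [pow_one] at this
      intro j k h
      obtain ⟨t, ht⟩ := Nat.even_mul_succ_self k
      omega
    exact h0.two_mul
  have hb : SD 2 1 b := by
    refine SD.two_mul (SD_psi_mul_X_pow 16 2 ?_)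
    intro j k h
    have e : 16*(k*(k+1)) = 16*(k*(k+1)) := rfl
    omega
  have hc : SD 4 1 c := by
    refine SD.two_mul (SD_psi_mul_X_pow 32 4 ?_)
    intro j k h
    omega
  -- groupings
  have hR0 : SD 0 0 (C*C + c*c) :=
    (hC.mul hC).add (((hc.mul hc).cast (by norm_num)).mono (by norm_num))
  have hR4 : SD 4 2 (2*(C*c)) := (hC.mul hc).two_mul
  set R0 := C*C + c*c with hR0'
  set R4 := 2*(C*c) with hR4'
  have hS0 : SD 0 0 (R0*R0 + R4*R4) :=
    (hR0.mul hR0).add (((hR4.mul hR4).cast (by norm_num)).mono (by norm_num))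
  have hS4 : SD 4 3 (2*(R0*R4)) := (hR0.mul hR4).two_mul
  set S0 := R0*R0 + R4*R4 with hS0'
  set S4 := 2*(R0*R4) with hS4'
  have hU0 : SD 0 0 (C*S0 + c*S4) :=
    (hC.mul hS0).add (((hc.mul hS4).cast (by norm_num)).mono (by norm_num))
  have hU4 : SD 4 1 (c*S0 + C*S4) :=
    (hc.mul hS0).add ((hC.mul hS4).mono (by norm_num))
  set U0 := C*S0 + c*S4 with hU0'
  set U4 := c*S0 + C*S4 with hU4'
  have hP0 : SD 0 0 (B*B) := hB.mul hB
  have hP2 : SD 2 2 (2*(B*b)) := (hB.mul hb).two_mul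
  have hP4 : SD 4 2 (b*b) := hb.mul hb
  set P0 := B*B with hP0'
  set P2 := 2*(B*b) with hP2'
  set P4 := b*b with hP4'
  have key : phi 1 * phi 2 ^ 2 * phi 4 ^ 4 =
      P0*U0 + P0*U4 + P2*U0 + P2*U4 + P4*U0 + P4*U4 +
      (a*(P0*S0) + a*(P0*S4) + a*(P2*S0) + a*(P2*S4) + a*(P4*S0) + a*(P4*S4)) := by
    rw [e1, e2, e4, hP0', hP2', hP4', hU0', hU4', hS0', hS4', hR0', hR4']
    ring
  rw [key]
  refine Tgt_add (Tgt_add (Tgt_add (Tgt_add (Tgt_add (Tgt_add ?_ ?_) ?_) ?_) ?_) ?_)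
    (Tgt_add (Tgt_add (Tgt_add (Tgt_add (Tgt_add ?_ ?_) ?_) ?_) ?_) ?_)
  · exact Tgt_of_SD (hP0.mul hU0) (by omega) (by omega) (by omega) (by omega) (by omega) (by omega) (by omega)
  · exact Tgt_of_SD (hP0.mul hU4) (by omega) (by omega) (by omega) (by omega) (by omega) (by omega) (by omega)
  · exact Tgt_of_SD (hP2.mul hU0) (by omega) (by omega) (by omega) (by omega) (by omega) (by omega) (by omega)
  · exact Tgt_of_SD (hP2.mul hU4) (by omega) (by omega) (by omega) (by omega) (by omega) (by omega) (by omega)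
  · exact Tgt_of_SD (hP4.mul hU0) (by omega) (by omega) (by omega) (by omega) (by omega) (by omega) (by omega)
  · exact Tgt_of_SD (hP4.mul hU4) (by omega) (by omega) (by omega) (by omega) (by omega) (by omega) (by omega)
  · exact Tgt_of_SD (ha.mul (hP0.mul hS0)) (by omega) (by omega) (by omega) (by omega) (by omega) (by omega) (by omega)
  · exact Tgt_of_SD (ha.mul (hP0.mul hS4)) (by omega) (by omega) (by omega) (by omega) (by omega) (by omega) (by omega)
  · exact Tgt_of_SD (ha.mul (hP2.mul hS0)) (by omega) (by omega) (by omega) (by omega) (by omega) (by omega) (by omega)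
  · exact Tgt_of_SD (ha.mul (hP2.mul hS4)) (by omega) (by omega) (by omega) (by omega) (by omega) (by omega) (by omega)
  · exact Tgt_of_SD (ha.mul (hP4.mul hS0)) (by omega) (by omega) (by omega) (by omega) (by omega) (by omega) (by omega)
  · exact Tgt_of_SD (ha.mul (hP4.mul hS4)) (by omega) (by omega) (by omega) (by omega) (by omega) (by omega) (by omega)

end Aux

/-- The coefficient of `qⁿ` in `φ(q)·φ(q²)²·φ(q⁴)⁴` is divisible by 2, 4, 8, 2, 8, 8, 32
according as `n ≡ 1, 2, 3, 4, 5, 6, 7 (mod 8)`. -/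
theorem coeff_phi_prod (n : ℕ) :
    (n % 8 = 1 → (2 : ℤ) ∣ PowerSeries.coeff (R := ℤ) n (phi 1 * phi 2 ^ 2 * phi 4 ^ 4)) ∧
    (n % 8 = 2 → (4 : ℤ) ∣ PowerSeries.coeff (R := ℤ) n (phi 1 * phi 2 ^ 2 * phi 4 ^ 4)) ∧
    (n % 8 = 3 → (8 : ℤ) ∣ PowerSeries.coeff (R := ℤ) n (phi 1 * phi 2 ^ 2 * phi 4 ^ 4)) ∧
    (n % 8 = 4 → (2 : ℤ) ∣ PowerSeries.coeff (R := ℤ) n (phi 1 * phi 2 ^ 2 * phi 4 ^ 4)) ∧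
    (n % 8 = 5 → (8 : ℤ) ∣ PowerSeries.coeff (R := ℤ) n (phi 1 * phi 2 ^ 2 * phi 4 ^ 4)) ∧
    (n % 8 = 6 → (8 : ℤ) ∣ PowerSeries.coeff (R := ℤ) n (phi 1 * phi 2 ^ 2 * phi 4 ^ 4)) ∧
    (n % 8 = 7 → (32 : ℤ) ∣ PowerSeries.coeff (R := ℤ) n (phi 1 * phi 2 ^ 2 * phi 4 ^ 4)) :=
  Aux.main n
end
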